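/- arXiv:2501.17566 — 11 statements merged into one kernel-verified Lean document; each statement's English description precedes it below -/
import Mathlib

section
/- Let p ≥ 1 and let m ≥ n ≥ 1 be integers. Then 2 ≤ n^{−1/p} ‖T_n‖_p ≤ m^{−1/p} ‖T_m‖_p; that is, the sequence n ↦ n^{−1/p} ‖T_n‖_p is nondecreasing and bounded below by 2 = ‖T_1‖_p. -/
open Finset Real Filter

/-- The n×n Cauchy–Toeplitz matrix `T_n = [2/(1+2(i-j))]`. -/
noncomputable def cauchyToeplitz (n : ℕ) : Matrix (Fin n) (Fin n) ℝ :=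
  fun i j => 2 / (1 + 2 * (((i : ℕ) : ℝ) - ((j : ℕ) : ℝ)))

/-- The ℓ_p norm of `T_n`: `(∑_{i,j} |a_{ij}|^p)^(1/p)`. -/
noncomputable def lpNorm (n : ℕ) (p : ℝ) : ℝ :=
  (∑ i : Fin n, ∑ j : Fin n, |cauchyToeplitz n i j| ^ p) ^ (1 / p)

/-- The ℓ_{p,q} norm of `T_n`: `(∑_j (∑_i |a_{ij}|^p)^(q/p))^(1/q)`. -/
noncomputable def lpqNorm (n : ℕ) (p q : ℝ) : ℝ :=
  (∑ j : Fin n, (∑ i : Fin n, |cauchyToeplitz n i j| ^ p) ^ (q / p)) ^ (1 / q)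

/-- The Riemann zeta function at a real argument (real-valued for real `p > 1`). -/
noncomputable def zetaR (p : ℝ) : ℝ := (riemannZeta p).re

noncomputable def cfun (p : ℝ) (d : ℤ) : ℝ := |2 / (1 + 2 * (d : ℝ))| ^ p

lemma cfun_nonneg (p : ℝ) (d : ℤ) : 0 ≤ cfun p d := Real.rpow_nonneg (abs_nonneg _) p

noncomputable def Ssum (p : ℝ) (n : ℕ) : ℝ :=
  ∑ i ∈ Finset.range n, ∑ j ∈ Finset.range n, cfun p ((i : ℤ) - j)

lemma Ssum_nonneg (p : ℝ) (n : ℕ) : 0 ≤ Ssum p n :=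
  Finset.sum_nonneg fun _ _ => Finset.sum_nonneg fun _ _ => cfun_nonneg p _

lemma lpNorm_eq (n : ℕ) (p : ℝ) : lpNorm n p = (Ssum p n) ^ (1 / p) := by
  unfold lpNorm Ssum cfun cauchyToeplitz
  congr 1
  rw [Fin.sum_univ_eq_sum_range
    (fun i => ∑ j : Fin n, |2 / (1 + 2 * ((i : ℝ) - ((j : ℕ) : ℝ)))| ^ p) n]
  refine Finset.sum_congr rfl fun i _ => ?_
  rw [Fin.sum_univ_eq_sum_range
    (fun j => |2 / (1 + 2 * ((i : ℝ) - (j : ℝ)))| ^ p) n]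
  refine Finset.sum_congr rfl fun j _ => ?_
  push_cast
  ring_nf

lemma row_le (p : ℝ) (n i : ℕ) (hi : i < n) :
    ∑ j ∈ Finset.range n, cfun p ((i : ℤ) - j)
      ≤ ∑ d ∈ Finset.Icc (-(n : ℤ)) n, cfun p d := by
  have hinj : ∀ a ∈ Finset.range n, ∀ b ∈ Finset.range n,
      (i : ℤ) - a = (i : ℤ) - b → a = b := by intro a _ b _ h; omega
  rw [← Finset.sum_image (f := cfun p) hinj]
  apply Finset.sum_le_sum_of_subset_of_nonneg
  · intro d hd
    simp only [Finset.mem_image, Finset.mem_range] at hd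
    obtain ⟨j, hj, rfl⟩ := hd
    simp only [Finset.mem_Icc]
    omega
  · intros; exact cfun_nonneg p _

lemma Ssum_succ (p : ℝ) (n : ℕ) :
    Ssum p (n + 1) = Ssum p n + ∑ d ∈ Finset.Icc (-(n : ℤ)) n, cfun p d := by
  have h1 : ∑ i ∈ Finset.range n, cfun p ((i : ℤ) - n)
      = ∑ d ∈ Finset.Icc (-(n : ℤ)) (-1), cfun p d := by
    rw [← Finset.sum_image (f := cfun p)
      (by intro a _ b _ h; omega : ∀ a ∈ Finset.range n, ∀ b ∈ Finset.range n,
        (a : ℤ) - n = (b : ℤ) - n → a = b)]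
    congr 1
    ext d
    simp only [Finset.mem_image, Finset.mem_range, Finset.mem_Icc]
    constructor
    · rintro ⟨a, ha, rfl⟩; omega
    · intro hd; exact ⟨(d + n).toNat, by omega, by omega⟩
  have h2 : ∑ j ∈ Finset.range (n + 1), cfun p ((n : ℤ) - j)
      = ∑ d ∈ Finset.Icc (0 : ℤ) n, cfun p d := by
    rw [← Finset.sum_image (f := cfun p)
      (by intro a _ b _ h; omega : ∀ a ∈ Finset.range (n+1), ∀ b ∈ Finset.range (n+1),
        (n : ℤ) - a = (n : ℤ) - b → a = b)]
    congr 1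
    ext d
    simp only [Finset.mem_image, Finset.mem_range, Finset.mem_Icc]
    constructor
    · rintro ⟨a, ha, rfl⟩; omega
    · intro hd; exact ⟨(n - d).toNat, by omega, by omega⟩
  have hsplit : Finset.Icc (-(n : ℤ)) n = Finset.Icc (-(n : ℤ)) (-1) ∪ Finset.Icc 0 n := by
    ext d; simp only [Finset.mem_Icc, Finset.mem_union]; omega
  have hdisj : Disjoint (Finset.Icc (-(n : ℤ)) (-1)) (Finset.Icc (0 : ℤ) n) := by
    simp only [Finset.disjoint_left, Finset.mem_Icc]
    intro d hd hd2; omega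
  rw [hsplit, Finset.sum_union hdisj, ← h1, ← h2]
  unfold Ssum
  rw [Finset.sum_range_succ]
  have : ∀ i ∈ Finset.range n,
      ∑ j ∈ Finset.range (n + 1), cfun p ((i : ℤ) - j)
        = (∑ j ∈ Finset.range n, cfun p ((i : ℤ) - j)) + cfun p ((i : ℤ) - n) := by
    intro i _; rw [Finset.sum_range_succ]
  rw [Finset.sum_congr rfl this, Finset.sum_add_distrib]
  push_cast
  ring

lemma key_step (p : ℝ) (n : ℕ) (hn : 1 ≤ n) :
    Ssum p n / n ≤ Ssum p (n + 1) / ((n + 1 : ℕ) : ℝ) := by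
  have hc : ((n + 1 : ℕ) : ℝ) = (n : ℝ) + 1 := by push_cast; ring
  rw [hc]
  set R := ∑ d ∈ Finset.Icc (-(n : ℤ)) n, cfun p d with hR
  have hSR : Ssum p n ≤ n * R := by
    calc Ssum p n ≤ ∑ _i ∈ Finset.range n, R :=
          Finset.sum_le_sum fun i hi => row_le p n i (Finset.mem_range.mp hi)
      _ = n * R := by rw [Finset.sum_const, Finset.card_range, nsmul_eq_mul]
  have hn0 : (0 : ℝ) < n := by exact_mod_cast hn
  rw [div_le_div_iff₀ hn0 (by positivity), Ssum_succ p n, ← hR]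
  have h := Ssum_nonneg p n
  push_cast
  nlinarith

lemma ratio_mono (p : ℝ) (n m : ℕ) (hn : 1 ≤ n) (hmn : n ≤ m) :
    Ssum p n / n ≤ Ssum p m / m := by
  induction m, hmn using Nat.le_induction with
  | base => exact le_rfl
  | succ k hk ih => exact ih.trans (key_step p k (hn.trans hk))

lemma Ssum_one (p : ℝ) : Ssum p 1 = 2 ^ p := by
  unfold Ssum cfun
  norm_num

theorem stmt_1 (p : ℝ) (hp : 1 ≤ p) (m n : ℕ) (hn : 1 ≤ n) (hmn : n ≤ m) :
    2 ≤ (n : ℝ) ^ (-(1 / p)) * lpNorm n p ∧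
      (n : ℝ) ^ (-(1 / p)) * lpNorm n p ≤ (m : ℝ) ^ (-(1 / p)) * lpNorm m p := by
  have hp0 : (0 : ℝ) < p := lt_of_lt_of_le one_pos hp
  have key : ∀ k : ℕ, 1 ≤ k →
      (k : ℝ) ^ (-(1 / p)) * lpNorm k p = (Ssum p k / k) ^ (1 / p) := by
    intro k hk
    have hk0 : (0 : ℝ) < k := by exact_mod_cast hk
    rw [lpNorm_eq, Real.div_rpow (Ssum_nonneg p k) hk0.le,
      Real.rpow_neg hk0.le, mul_comm]
    ring
  have hm1 : 1 ≤ m := hn.trans hmn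
  have hexp : (0 : ℝ) ≤ 1 / p := by positivity
  rw [key n hn, key m hm1]
  constructor
  · have hq : Ssum p 1 / ((1 : ℕ) : ℝ) ≤ Ssum p n / n := ratio_mono p 1 n le_rfl hn
    have h2 : Ssum p 1 / ((1 : ℕ) : ℝ) = 2 ^ p := by rw [Ssum_one]; norm_num
    have h3 : ((2 : ℝ) ^ p) ^ (1 / p) = 2 := by
      rw [← Real.rpow_mul (by norm_num : (0 : ℝ) ≤ 2), mul_one_div,
        div_self hp0.ne', Real.rpow_one]
    calc (2 : ℝ) = ((2 : ℝ) ^ p) ^ (1 / p) := h3.symm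
      _ ≤ (Ssum p n / n) ^ (1 / p) := by
          apply Real.rpow_le_rpow (by positivity) (h2 ▸ hq) hexp
  · exact Real.rpow_le_rpow (div_nonneg (Ssum_nonneg p n) (Nat.cast_nonneg n))
      (ratio_mono p n m hn hmn) hexp
end

section
/- Let p > 1 and n ≥ 2. Then [(1 + 2/n²)(2^p − 1)ζ(p) − C′(n,p)]^{1/p} < n^{−1/p} ‖T_n‖_p < (2 − 1/n)^{1/p} [(2^p − 1)ζ(p) − C″(n,p)]^{1/p}, where C′(n,p) = (n² + 2)/((p − 1) n^{p+1}) + 2^{p+1}/(n (2n − 1)^p) and C″(n,p) = 2^{p−1}/((p − 1)(2n + 1)^{p−1}). -/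
open Finset Real Filter

noncomputable def uu (p : ℝ) (k : ℕ) : ℝ := (2*(k:ℝ)+1) ^ (-p)

lemma uu_base_pos (k : ℕ) : (0:ℝ) < 2*(k:ℝ)+1 := by positivity

lemma uu_pos (p : ℝ) (k : ℕ) : 0 < uu p k := Real.rpow_pos_of_pos (uu_base_pos k) _

lemma uu_anti (p : ℝ) (hp : 0 < p) (k : ℕ) : uu p (k+1) ≤ uu p k := by
  apply Real.rpow_le_rpow_of_nonpos (uu_base_pos k) (by push_cast; linarith) (by linarith)

lemma uu_zero (p : ℝ) : uu p 0 = 1 := by simp [uu]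

lemma summable_shift (p : ℝ) (hp : 1 < p) :
    Summable (fun k : ℕ => ((k:ℝ)+1) ^ (-p)) := by
  have h : Summable (fun k : ℕ => ((k:ℝ) ^ p)⁻¹) := Real.summable_nat_rpow_inv.mpr hp
  have h2 : Summable (fun k : ℕ => (((k+1 : ℕ):ℝ) ^ p)⁻¹) := (summable_nat_add_iff 1).mpr h
  refine h2.congr fun k => ?_
  rw [← Real.rpow_neg (by positivity)]
  push_cast
  ring_nf

lemma summable_uu (p : ℝ) (hp : 1 < p) : Summable (uu p) := by
  have h := summable_shift p hp
  refine Summable.of_nonneg_of_le (fun k => (uu_pos p k).le) (fun k => ?_) h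
  exact Real.rpow_le_rpow_of_nonpos (by positivity) (by push_cast; linarith) (by linarith)

lemma zetaR_eq (p : ℝ) (hp : 1 < p) : zetaR p = ∑' k : ℕ, ((k:ℝ)+1) ^ (-p) := by
  have hre : 1 < (Complex.ofReal p).re := by simpa using hp
  have h1 : riemannZeta p = ∑' n : ℕ, 1 / ((n : ℂ) + 1) ^ (p : ℂ) :=
    zeta_eq_tsum_one_div_nat_add_one_cpow hre
  have h2 : ∀ n : ℕ, 1 / ((n : ℂ) + 1) ^ (p : ℂ) = ((((n:ℝ)+1) ^ (-p) : ℝ) : ℂ) := by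
    intro n
    have hb : (0:ℝ) ≤ (n:ℝ)+1 := by positivity
    rw [show ((n : ℂ) + 1) = (((n:ℝ)+1 : ℝ) : ℂ) by push_cast; ring,
      ← Complex.ofReal_cpow hb, Real.rpow_neg hb]
    push_cast
    rw [one_div]
  rw [zetaR, h1]
  simp_rw [h2]
  rw [← Complex.ofReal_tsum, Complex.ofReal_re]

lemma zeta_identity (p : ℝ) (hp : 1 < p) :
    (2 ^ p - 1) * zetaR p = 2 ^ p * ∑' k : ℕ, uu p k := by
  have hf : Summable (fun k : ℕ => ((k:ℝ)+1) ^ (-p)) := summable_shift p hp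
  set f : ℕ → ℝ := fun k => ((k:ℝ)+1) ^ (-p) with hfdef
  have he : (fun k : ℕ => f (2*k)) = uu p := by
    funext k; simp only [hfdef, uu]; push_cast; ring_nf
  have ho : (fun k : ℕ => f (2*k+1)) = (fun k => 2 ^ (-p) * f k) := by
    funext k
    simp only [hfdef]
    rw [← Real.mul_rpow (by norm_num) (by positivity)]
    push_cast
    ring_nf
  have hsum_e : Summable (fun k : ℕ => f (2*k)) := by rw [he]; exact summable_uu p hp
  have hsum_o : Summable (fun k : ℕ => f (2*k+1)) := by
    rw [ho]; exact hf.mul_left _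
  have key := tsum_even_add_odd hsum_e hsum_o
  rw [← zetaR_eq p hp] at key
  have h2 : ∑' k : ℕ, f (2*k+1) = 2 ^ (-p) * zetaR p := by
    rw [ho, tsum_mul_left, ← zetaR_eq p hp]
  have h1 : ∑' k : ℕ, f (2*k) = ∑' k, uu p k := by rw [he]
  rw [h1, h2] at key
  have h2p : (2:ℝ) ^ p * 2 ^ (-p) = 1 := by
    rw [← Real.rpow_add (by norm_num)]; simp
  linear_combination (-(2:ℝ)^p) * key + zetaR p * h2p

lemma telescope_hasSum (F : ℕ → ℝ) (hd : ∀ k, F (k+1) ≤ F k)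
    (h0 : Tendsto F atTop (nhds 0)) :
    HasSum (fun k => F k - F (k+1)) (F 0) := by
  rw [hasSum_iff_tendsto_nat_of_nonneg (fun i => by linarith [hd i]) _]
  have : (fun n : ℕ => ∑ i ∈ range n, (F i - F (i+1))) = fun n => F 0 - F n := by
    funext n; exact Finset.sum_range_sub' F n
  rw [this]
  simpa using tendsto_const_nhds.sub h0

lemma deriv_pos_lt (f f' : ℝ → ℝ) (b : ℝ) (hb : 0 < b)
    (hf : ∀ t ∈ Set.Icc (0:ℝ) b, HasDerivAt f (f' t) t)
    (hpos : ∀ t ∈ Set.Ioo (0:ℝ) b, 0 < f' t) : f 0 < f b := by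
  have hmono : StrictMonoOn f (Set.Icc 0 b) := by
    apply strictMonoOn_of_deriv_pos (convex_Icc 0 b)
    · exact fun t ht => (hf t ht).continuousAt.continuousWithinAt
    · intro t ht
      rw [interior_Icc] at ht
      rw [(hf t (Set.mem_Icc_of_Ioo ht)).deriv]
      exact hpos t ht
  exact hmono (Set.left_mem_Icc.2 hb.le) (Set.right_mem_Icc.2 hb.le) hb

lemma hasDerivAt_shift_rpow (p a c : ℝ) (t : ℝ) (h : a + c*t ≠ 0) :
    HasDerivAt (fun t => (a + c*t) ^ (1-p)) ((1-p) * (a + c*t) ^ (-p) * c) t := by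
  have h1 : HasDerivAt (fun t : ℝ => a + c*t) c t := by
    simpa using ((hasDerivAt_id t).const_mul c).const_add a
  have h2 := (Real.hasDerivAt_rpow_const (p := 1-p) (Or.inl h)).comp t h1
  rw [show (1:ℝ)-p-1 = -p by ring] at h2
  exact h2

lemma hasDerivAt_linear (c : ℝ) (t : ℝ) : HasDerivAt (fun t : ℝ => c * t) c t := by
  simpa using (hasDerivAt_id t).const_mul c

/-- Tangent line bound: for `1 < p`, `a^(1-p) - (a+h)^(1-p) ≤ (p-1) * a^(-p) * h`. -/
lemma tangent_bound {p a h : ℝ} (hp : 1 < p) (ha : 0 < a) (hh : 0 ≤ h) :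
    a ^ (1-p) - (a+h) ^ (1-p) ≤ (p-1) * a ^ (-p) * h := by
  rcases eq_or_lt_of_le hh with rfl | hh'
  · simp
  set f : ℝ → ℝ := fun t => (a + 1*t) ^ (1-p) + ((p-1) * a ^ (-p)) * t with hf
  have key : f 0 < f h := by
    apply deriv_pos_lt f (fun t => (1-p) * (a + 1*t) ^ (-p) * 1 + (p-1) * a ^ (-p)) h hh'
    · intro t ht
      have h0 : a + 1*t ≠ 0 := by have := ht.1; positivity
      exact (hasDerivAt_shift_rpow p a 1 t h0).add (hasDerivAt_linear _ t)
    · intro t ht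
      have hat : a < a + 1*t := by have := ht.1; linarith
      have hlt : (a + 1*t) ^ (-p) < a ^ (-p) :=
        Real.rpow_lt_rpow_of_neg ha hat (by linarith)
      nlinarith
  simp only [hf, mul_zero, add_zero, mul_one, one_mul] at key
  linarith

/-- Strict midpoint bound: `2(p-1) m^(-p) < (m-1)^(1-p) - (m+1)^(1-p)` for `m ≥ 2`. -/
lemma midpoint_bound {p m : ℝ} (hp : 1 < p) (hm : 2 ≤ m) :
    2*(p-1)*m ^ (-p) < (m-1) ^ (1-p) - (m+1) ^ (1-p) := by
  set f : ℝ → ℝ := fun t => (m + (-1)*t) ^ (1-p) - (m + 1*t) ^ (1-p) - (2*(p-1)*m ^ (-p)) * t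
    with hf
  have key : f 0 < f 1 := by
    apply deriv_pos_lt f
      (fun t => ((1-p) * (m + (-1)*t) ^ (-p) * (-1) - (1-p) * (m + 1*t) ^ (-p) * 1)
        - 2*(p-1)*m ^ (-p)) 1 one_pos
    · intro t ht
      have h1 : m + (-1)*t ≠ 0 := by obtain ⟨h1, h2⟩ := ht; nlinarith
      have h2 : m + 1*t ≠ 0 := by obtain ⟨h1, _⟩ := ht; positivity
      exact ((hasDerivAt_shift_rpow p m (-1) t h1).sub
        (hasDerivAt_shift_rpow p m 1 t h2)).sub (hasDerivAt_linear _ t)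
    · intro t ht
      obtain ⟨ht0, ht1⟩ := ht
      have hx : (0:ℝ) < m + (-1)*t := by nlinarith
      have hy : (0:ℝ) < m + 1*t := by positivity
      set X := m + (-1)*t
      set Y := m + 1*t
      have hsq : X ^ (-p/2) * Y ^ (-p/2) = (X*Y) ^ (-p/2) :=
        (Real.mul_rpow hx.le hy.le).symm
      have hXX : X ^ (-p/2) * X ^ (-p/2) = X ^ (-p) := by
        rw [← Real.rpow_add hx]; ring_nf
      have hYY : Y ^ (-p/2) * Y ^ (-p/2) = Y ^ (-p) := by
        rw [← Real.rpow_add hy]; ring_nf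
      have hamgm : 2 * ((X*Y) ^ (-p/2)) ≤ X ^ (-p) + Y ^ (-p) := by
        nlinarith [sq_nonneg (X ^ (-p/2) - Y ^ (-p/2))]
      have hprod : X * Y < m^2 := by simp only [X, Y]; nlinarith
      have hm2 : (m^2 : ℝ) ^ (-p/2) = m ^ (-p) := by
        rw [show (m:ℝ)^2 = m ^ (2:ℝ) by rw [Real.rpow_two], ← Real.rpow_mul (by linarith)]
        ring_nf
      have hstr : (m^2 : ℝ) ^ (-p/2) < (X*Y) ^ (-p/2) := by
        apply Real.rpow_lt_rpow_of_neg (by positivity) hprod (by linarith)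
      rw [hm2] at hstr
      nlinarith
  simp only [hf] at key
  norm_num at key
  have e1 : m + -1 = m - 1 := by ring
  rw [e1] at key
  linarith

lemma tendsto_aux (p : ℝ) (hp : 1 < p) (c : ℝ) (n : ℕ) :
    Tendsto (fun k : ℕ => (2*((n:ℝ)+k)+c) ^ (1-p) / (2*(p-1))) atTop (nhds 0) := by
  have hbase : Tendsto (fun k : ℕ => 2*((n:ℝ)+k)+c) atTop atTop := by
    have h1 : Tendsto (fun k : ℕ => (k:ℝ)) atTop atTop := tendsto_natCast_atTop_atTop
    have h2 : Tendsto (fun k : ℕ => (k:ℝ) * 2) atTop atTop := h1.atTop_mul_const two_pos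
    have h3 := tendsto_atTop_add_const_right atTop (2*(n:ℝ)+c) h2
    exact h3.congr (fun k => by ring)
  have h2 : Tendsto (fun x : ℝ => x ^ (1-p)) atTop (nhds 0) := by
    have := tendsto_rpow_neg_atTop (y := p-1) (by linarith)
    simpa [show -(p-1) = 1-p by ring] using this
  simpa using ((h2.comp hbase).div_const (2*(p-1)))

lemma summable_tail (p : ℝ) (hp : 1 < p) (n : ℕ) :
    Summable (fun k : ℕ => uu p (k+n)) :=
  (summable_nat_add_iff n).mpr (summable_uu p hp)

lemma uu_tail_eq (p : ℝ) (n k : ℕ) : uu p (k+n) = (2*((n:ℝ)+k)+1) ^ (-p) := by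
  simp only [uu]; push_cast; ring_nf

lemma tail_lower (p : ℝ) (hp : 1 < p) (n : ℕ) :
    (2*(n:ℝ)+1) ^ (1-p) / (2*(p-1)) ≤ ∑' k : ℕ, uu p (k+n) := by
  have hp1 : (0:ℝ) < p - 1 := by linarith
  set G : ℕ → ℝ := fun k => (2*((n:ℝ)+k)+1) ^ (1-p) / (2*(p-1)) with hG
  have hd : ∀ k, G (k+1) ≤ G k := by
    intro k
    have h : (2*((n:ℝ)+(k+1:ℕ))+1) ^ (1-p) ≤ (2*((n:ℝ)+k)+1) ^ (1-p) := by
      apply Real.rpow_le_rpow_of_nonpos (by positivity) (by push_cast; linarith) (by linarith)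
    simp only [hG]
    exact (div_le_div_iff_of_pos_right (by linarith)).mpr h
  have hsum : HasSum (fun k => G k - G (k+1)) (G 0) :=
    telescope_hasSum G hd (tendsto_aux p hp 1 n)
  have hterm : ∀ k, G k - G (k+1) ≤ uu p (k+n) := by
    intro k
    have ha : (0:ℝ) < 2*((n:ℝ)+k)+1 := by positivity
    have ht := tangent_bound (a := 2*((n:ℝ)+k)+1) hp ha (by norm_num : (0:ℝ) ≤ 2)
    simp only [hG]
    rw [div_sub_div_same, div_le_iff₀ (by linarith), uu_tail_eq]
    have e1 : (2*((n:ℝ)+(k+1:ℕ))+1) = (2*((n:ℝ)+k)+1) + 2 := by push_cast; ring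
    rw [e1]
    nlinarith [ht]
  calc (2*(n:ℝ)+1) ^ (1-p) / (2*(p-1)) = G 0 := by simp [hG]
    _ = ∑' k, (G k - G (k+1)) := hsum.tsum_eq.symm
    _ ≤ ∑' k, uu p (k+n) := Summable.tsum_le_tsum hterm hsum.summable (summable_tail p hp n)

lemma tail_upper (p : ℝ) (hp : 1 < p) (n : ℕ) (hn : 1 ≤ n) :
    ∑' k : ℕ, uu p (k+n) < (2*(n:ℝ)) ^ (1-p) / (2*(p-1)) := by
  have hp1 : (0:ℝ) < p - 1 := by linarith
  have hn' : (1:ℝ) ≤ (n:ℝ) := by exact_mod_cast hn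
  set E : ℕ → ℝ := fun k => (2*((n:ℝ)+k)) ^ (1-p) / (2*(p-1)) with hE
  have hd : ∀ k, E (k+1) ≤ E k := by
    intro k
    have h : (2*((n:ℝ)+(k+1:ℕ))) ^ (1-p) ≤ (2*((n:ℝ)+k)) ^ (1-p) := by
      apply Real.rpow_le_rpow_of_nonpos (by positivity) (by push_cast; linarith) (by linarith)
    simp only [hE]
    exact (div_le_div_iff_of_pos_right (by linarith)).mpr h
  have hsum : HasSum (fun k => E k - E (k+1)) (E 0) := by
    have := telescope_hasSum E hd ?_
    · exact this
    · have := tendsto_aux p hp 0 n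
      simpa using this
  have hterm : ∀ k, uu p (k+n) < E k - E (k+1) := by
    intro k
    have hm2 : (2:ℝ) ≤ 2*((n:ℝ)+k)+1 := by
      nlinarith [Nat.cast_nonneg (α := ℝ) k]
    have hmid := midpoint_bound (m := 2*((n:ℝ)+k)+1) hp hm2
    simp only [hE]
    rw [div_sub_div_same, lt_div_iff₀ (by linarith), uu_tail_eq]
    push_cast
    ring_nf at hmid ⊢
    linarith [hmid]
  calc ∑' k, uu p (k+n) < ∑' k, (E k - E (k+1)) :=
        Summable.tsum_lt_tsum_of_nonneg (fun b => (uu_pos p _).le) (fun b => (hterm b).le)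
          (hterm 0) hsum.summable
    _ = E 0 := hsum.tsum_eq
    _ = (2*(n:ℝ)) ^ (1-p) / (2*(p-1)) := by simp [hE]

lemma sq_sum (m : ℕ) : ∑ k ∈ range m, (2*(k:ℝ)+1) = (m:ℝ)^2 := by
  induction m with
  | zero => simp
  | succ m ih => rw [Finset.sum_range_succ, ih]; push_cast; ring

/-- Key identity: `∑_{i<n} (A i + A (i+1)) = 2 n A n - ∑_{k<n} (2k+1) u k`. -/
lemma key_identity (p : ℝ) (n : ℕ) :
    ∑ i ∈ range n, ((∑ k ∈ range i, uu p k) + ∑ k ∈ range (i+1), uu p k)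
      = 2*(n:ℝ) * (∑ k ∈ range n, uu p k) - ∑ k ∈ range n, (2*(k:ℝ)+1) * uu p k := by
  induction n with
  | zero => simp
  | succ n ih =>
    rw [Finset.sum_range_succ, ih, Finset.sum_range_succ (f := fun k => (2*(k:ℝ)+1) * uu p k),
      Finset.sum_range_succ (f := uu p)]
    push_cast
    ring

/-- Abel-type bound: `n * D ≤ (n²-2) * A + 2 n * u (n-1)`. -/
lemma abel_bound (p : ℝ) (hp : 1 < p) (n : ℕ) (hn : 2 ≤ n) :
    (n:ℝ) * (∑ k ∈ range n, (2*(k:ℝ)+1) * uu p k)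
      ≤ ((n:ℝ)^2 - 2) * (∑ k ∈ range n, uu p k) + 2*(n:ℝ) * uu p (n-1) := by
  set g : ℕ → ℝ := fun k => ((n:ℝ)^2 - 2) - (n:ℝ)*(2*(k:ℝ)+1) with hg
  have hG : ∀ m : ℕ, ∑ k ∈ range m, g k = (m:ℝ)*((n:ℝ)^2-2) - (n:ℝ)*(m:ℝ)^2 := by
    intro m
    simp only [hg, Finset.sum_sub_distrib, Finset.sum_const, ← Finset.mul_sum, sq_sum,
      Finset.card_range, nsmul_eq_mul]
    ring
  have habel := Finset.sum_range_by_parts (M := ℝ) (uu p) g n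
  have hsum_ug : ∑ i ∈ range n, uu p i • g i
      = ((n:ℝ)^2-2) * (∑ k ∈ range n, uu p k) - (n:ℝ) * ∑ k ∈ range n, (2*(k:ℝ)+1) * uu p k := by
    simp only [smul_eq_mul, hg, Finset.mul_sum]
    rw [← Finset.sum_sub_distrib]
    congr 1; funext k; ring
  have hgsum : ∑ k ∈ range n, g k = -2*(n:ℝ) := by
    rw [hG n]; ring
  have hcorr : 0 ≤ ∑ i ∈ range (n-1), (uu p i - uu p (i+1)) • (∑ j ∈ range (i+1), g j) := by
    apply Finset.sum_nonneg
    intro i hi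
    rw [Finset.mem_range] at hi
    have h1 : 0 ≤ uu p i - uu p (i+1) := by linarith [uu_anti p (by linarith) i]
    have h2 : (0:ℝ) ≤ ∑ j ∈ range (i+1), g j := by
      rw [hG (i+1)]
      have hi1 : ((i:ℝ)+1) ≤ (n:ℝ) - 1 := by
        have : (i:ℕ) + 1 ≤ n - 1 := hi
        have := (Nat.cast_le (α := ℝ)).mpr this
        push_cast at this
        have hn2 : (2:ℝ) ≤ (n:ℝ) := by exact_mod_cast hn
        rw [Nat.cast_sub (by omega)] at this
        push_cast at this
        linarith
      have hn2 : (2:ℝ) ≤ (n:ℝ) := by exact_mod_cast hn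
      push_cast
      have hx : (0:ℝ) ≤ (n:ℝ)^2 - 2 - (n:ℝ)*((i:ℝ)+1) := by nlinarith
      nlinarith [mul_nonneg (by linarith [Nat.cast_nonneg (α := ℝ) i] : (0:ℝ) ≤ (i:ℝ)+1) hx]
    rw [smul_eq_mul]
    exact mul_nonneg h1 h2
  have hneg : ∑ i ∈ range n, uu p i • g i ≥ uu p (n-1) • (-2*(n:ℝ)) := by
    rw [habel, hgsum]
    have : ∑ i ∈ range (n-1), (uu p (i+1) - uu p i) • (∑ j ∈ range (i+1), g j) ≤ 0 := by
      have : ∑ i ∈ range (n-1), (uu p (i+1) - uu p i) • (∑ j ∈ range (i+1), g j)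
          = - ∑ i ∈ range (n-1), (uu p i - uu p (i+1)) • (∑ j ∈ range (i+1), g j) := by
        rw [← Finset.sum_neg_distrib]
        congr 1; funext i; simp [smul_eq_mul]; ring
      rw [this]
      linarith [hcorr]
    linarith [this]
  rw [hsum_ug] at hneg
  simp only [smul_eq_mul] at hneg
  linarith [hneg]

lemma entry_ge (p : ℝ) (i j : ℕ) (hji : j ≤ i) :
    |2 / (1 + 2*((i:ℝ) - (j:ℝ)))| ^ p = 2^p * uu p (i-j) := by
  have e : ((i-j:ℕ):ℝ) = (i:ℝ) - (j:ℝ) := by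
    rw [Nat.cast_sub hji]
  have hx : (0:ℝ) < 1 + 2*((i:ℝ) - (j:ℝ)) := by
    rw [← e]; positivity
  rw [uu, show 2*((i-j:ℕ):ℝ)+1 = 1 + 2*((i:ℝ)-(j:ℝ)) by rw [e]; ring]
  rw [abs_of_pos (by positivity), Real.div_rpow (by norm_num) hx.le,
    Real.rpow_neg hx.le, div_eq_mul_inv]

lemma entry_lt (p : ℝ) (i j : ℕ) (hij : i < j) :
    |2 / (1 + 2*((i:ℝ) - (j:ℝ)))| ^ p = 2^p * uu p (j-i-1) := by
  have e : ((j-i:ℕ):ℝ) = (j:ℝ) - (i:ℝ) := by rw [Nat.cast_sub hij.le]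
  have he1 : (1:ℝ) ≤ ((j-i:ℕ):ℝ) := by exact_mod_cast Nat.one_le_iff_ne_zero.mpr (by omega)
  have hneg : 1 + 2*((i:ℝ) - (j:ℝ)) < 0 := by rw [← sub_neg_eq_add]; nlinarith [e, he1]
  have habs : |1 + 2*((i:ℝ) - (j:ℝ))| = 2*((j-i:ℕ):ℝ) - 1 := by
    rw [abs_of_neg hneg, e]; ring
  have hbase : (0:ℝ) < 2*((j-i:ℕ):ℝ) - 1 := by linarith
  rw [uu, show 2*((j-i-1:ℕ):ℝ)+1 = 2*((j-i:ℕ):ℝ) - 1 by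
      rw [Nat.cast_sub (by omega : 1 ≤ j - i)]; push_cast; ring]
  rw [abs_div, abs_two, habs, Real.div_rpow (by norm_num) hbase.le,
    Real.rpow_neg hbase.le, div_eq_mul_inv]

lemma row_sum (p : ℝ) (n i : ℕ) (hi : i < n) :
    ∑ j ∈ range n, |2 / (1 + 2*((i:ℝ) - (j:ℝ)))| ^ p
      = 2^p * ((∑ k ∈ range (i+1), uu p k) + ∑ k ∈ range (n-1-i), uu p k) := by
  have hi1 : i + 1 ≤ n := hi
  conv_lhs => rw [Finset.range_eq_Ico]
  rw [← Finset.sum_Ico_consecutive _ (Nat.zero_le (i+1)) hi1]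
  have h1 : ∑ j ∈ Finset.Ico 0 (i+1), |2 / (1 + 2*((i:ℝ) - (j:ℝ)))| ^ p
      = 2^p * ∑ k ∈ range (i+1), uu p k := by
    rw [← Finset.range_eq_Ico, Finset.mul_sum]
    rw [show ∑ k ∈ range (i+1), 2^p * uu p k = ∑ k ∈ range (i+1), 2^p * uu p (i+1-1-k) from
      (Finset.sum_range_reflect (fun k => 2^p * uu p k) (i+1)).symm]
    apply Finset.sum_congr rfl
    intro j hj
    rw [Finset.mem_range] at hj
    rw [entry_ge p i j (by omega), show i+1-1-j = i-j from by omega]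
  have h2 : ∑ j ∈ Finset.Ico (i+1) n, |2 / (1 + 2*((i:ℝ) - (j:ℝ)))| ^ p
      = 2^p * ∑ k ∈ range (n-1-i), uu p k := by
    rw [Finset.sum_Ico_eq_sum_range, Finset.mul_sum]
    rw [show n - (i+1) = n - 1 - i by omega]
    apply Finset.sum_congr rfl
    intro k hk
    rw [entry_lt p i (i+1+k) (by omega), show i+1+k-i-1 = k from by omega]
  rw [h1, h2]
  ring

lemma S_eq (p : ℝ) (n : ℕ) :
    ∑ i : Fin n, ∑ j : Fin n, |cauchyToeplitz n i j| ^ p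
      = 2^p * (2*(n:ℝ) * (∑ k ∈ range n, uu p k)
          - ∑ k ∈ range n, (2*(k:ℝ)+1) * uu p k) := by
  have hstep : ∀ i : Fin n, ∑ j : Fin n, |cauchyToeplitz n i j| ^ p
      = ∑ j ∈ range n, |2 / (1 + 2*(((i:ℕ):ℝ) - (j:ℝ)))| ^ p := by
    intro i
    exact Fin.sum_univ_eq_sum_range (fun j => |2 / (1 + 2*(((i:ℕ):ℝ) - (j:ℝ)))| ^ p) n
  calc ∑ i : Fin n, ∑ j : Fin n, |cauchyToeplitz n i j| ^ p
      = ∑ i : Fin n, ∑ j ∈ range n, |2 / (1 + 2*(((i:ℕ):ℝ) - (j:ℝ)))| ^ p :=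
        Finset.sum_congr rfl (fun i _ => hstep i)
    _ = ∑ i ∈ range n, ∑ j ∈ range n, |2 / (1 + 2*((i:ℝ) - (j:ℝ)))| ^ p :=
        Fin.sum_univ_eq_sum_range (fun i => ∑ j ∈ range n, |2 / (1 + 2*((i:ℝ) - (j:ℝ)))| ^ p) n
    _ = ∑ i ∈ range n, 2^p * ((∑ k ∈ range (i+1), uu p k) + ∑ k ∈ range (n-1-i), uu p k) := by
        apply Finset.sum_congr rfl
        intro i hi
        exact row_sum p n i (Finset.mem_range.mp hi)
    _ = 2^p * ∑ i ∈ range n, ((∑ k ∈ range (n-1-i), uu p k) + ∑ k ∈ range (i+1), uu p k) := by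
        rw [Finset.mul_sum]; apply Finset.sum_congr rfl; intro i _; ring
    _ = 2^p * ∑ i ∈ range n, ((∑ k ∈ range i, uu p k) + ∑ k ∈ range (i+1), uu p k) := by
        congr 1
        rw [Finset.sum_add_distrib, Finset.sum_add_distrib]
        congr 1
        exact Finset.sum_range_reflect (fun i => ∑ k ∈ range i, uu p k) n
    _ = 2^p * (2*(n:ℝ) * (∑ k ∈ range n, uu p k)
          - ∑ k ∈ range n, (2*(k:ℝ)+1) * uu p k) := by rw [key_identity]

set_option maxHeartbeats 1000000 in
theorem stmt_4 (p : ℝ) (hp : 1 < p) (n : ℕ) (hn : 2 ≤ n) :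
    ((1 + 2 / (n : ℝ) ^ 2) * ((2 ^ p - 1) * zetaR p) -
        (((n : ℝ) ^ 2 + 2) / ((p - 1) * (n : ℝ) ^ (p + 1)) +
          2 ^ (p + 1) / ((n : ℝ) * (2 * (n : ℝ) - 1) ^ p))) ^ (1 / p) <
      (n : ℝ) ^ (-(1 / p)) * lpNorm n p ∧
    (n : ℝ) ^ (-(1 / p)) * lpNorm n p <
      (2 - 1 / (n : ℝ)) ^ (1 / p) *
        ((2 ^ p - 1) * zetaR p -
          2 ^ (p - 1) / ((p - 1) * (2 * (n : ℝ) + 1) ^ (p - 1))) ^ (1 / p) := by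
  have hp1 : (0:ℝ) < p - 1 := by linarith
  have hn0 : (0:ℝ) < (n:ℝ) := by positivity
  have hn2 : (2:ℝ) ≤ (n:ℝ) := by exact_mod_cast hn
  set A : ℝ := ∑ k ∈ range n, uu p k with hA
  set D : ℝ := ∑ k ∈ range n, (2*(k:ℝ)+1) * uu p k with hD
  set Z : ℝ := ∑' k : ℕ, uu p k with hZ
  set T : ℝ := ∑' k : ℕ, uu p (k+n) with hT
  set c2 : ℝ := (2*(n:ℝ)+1) ^ (1-p) / (2*(p-1)) with hc2
  set I : ℝ := (2*(n:ℝ)) ^ (1-p) / (2*(p-1)) with hI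
  set un1 : ℝ := uu p (n-1) with hun1def
  have hZAT : A + T = Z := Summable.sum_add_tsum_nat_add n (summable_uu p hp)
  have hcl : c2 ≤ T := tail_lower p hp n
  have hcu : T < I := tail_upper p hp n (by omega)
  -- I - c2 ≤ (2n)^(-p)/2
  have hIC : I - c2 ≤ (2*(n:ℝ)) ^ (-p) / 2 := by
    have ht := tangent_bound (a := 2*(n:ℝ)) (h := 1) hp (by positivity) zero_le_one
    rw [hI, hc2, div_sub_div_same, div_le_div_iff₀ (by linarith) (by norm_num)]
    nlinarith [ht]
  -- numeric bounds
  have h2n : (2*(n:ℝ)) ^ (-p) < 1/4 := by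
    have h1 : (2*(n:ℝ)) ^ (-p) ≤ (4:ℝ) ^ (-p) :=
      Real.rpow_le_rpow_of_nonpos (by norm_num) (by linarith) (by linarith)
    have h2 : (4:ℝ) ^ (-p) < (4:ℝ) ^ (-1:ℝ) :=
      Real.rpow_lt_rpow_of_exponent_lt (by norm_num) (by linarith)
    have h3 : (4:ℝ) ^ (-1:ℝ) = 1/4 := by
      rw [Real.rpow_neg_one]; norm_num
    rw [h3] at h2
    exact lt_of_le_of_lt h1 h2
  have hun1eq : un1 = (2*(n:ℝ)-1) ^ (-p) := by
    rw [hun1def, uu, Nat.cast_sub (by omega : 1 ≤ n)]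
    norm_num
    ring_nf
  have hun1 : un1 < 1/3 := by
    rw [hun1eq]
    have h1 : (2*(n:ℝ)-1) ^ (-p) ≤ (3:ℝ) ^ (-p) :=
      Real.rpow_le_rpow_of_nonpos (by norm_num) (by linarith) (by linarith)
    have h2 : (3:ℝ) ^ (-p) < (3:ℝ) ^ (-1:ℝ) :=
      Real.rpow_lt_rpow_of_exponent_lt (by norm_num) (by linarith)
    have h3 : (3:ℝ) ^ (-1:ℝ) = 1/3 := by rw [Real.rpow_neg_one]; norm_num
    rw [h3] at h2
    exact lt_of_le_of_lt h1 h2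
  have hun1pos : 0 < un1 := uu_pos p (n-1)
  have hA1 : 1 ≤ A := by
    have := Finset.single_le_sum (f := uu p) (fun i _ => (uu_pos p i).le)
      (Finset.mem_range.mpr (by omega : 0 < n))
    rw [uu_zero] at this
    exact this
  have hAD : A + 2 * uu p 1 ≤ D := by
    have hsplit : D = A + ∑ k ∈ range n, (2*(k:ℝ)) * uu p k := by
      rw [hD, hA, ← Finset.sum_add_distrib]
      apply Finset.sum_congr rfl
      intro k _; ring
    have hone : 2 * uu p 1 ≤ ∑ k ∈ range n, (2*(k:ℝ)) * uu p k := by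
      have := Finset.single_le_sum (f := fun k : ℕ => (2*(k:ℝ)) * uu p k)
        (fun i _ => by have := (uu_pos p i).le; positivity)
        (Finset.mem_range.mpr (by omega : 1 < n))
      simpa using this
    linarith [hsplit, hone]
  have habel := abel_bound p hp n hn
  rw [← hA, ← hD, ← hun1def] at habel
  have hSeq := S_eq p n
  rw [← hA, ← hD] at hSeq
  set S : ℝ := ∑ i : Fin n, ∑ j : Fin n, |cauchyToeplitz n i j| ^ p with hSdef
  have h2p : (0:ℝ) < 2 ^ p := Real.rpow_pos_of_pos two_pos p
  set Λ : ℝ := (1 + 2/(n:ℝ)^2) * (Z - I) - (2/(n:ℝ)) * un1 with hΛ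
  set R : ℝ := 2*A - D/(n:ℝ) with hR
  -- Λ < R
  have hZIub : Z - I < A := by linarith
  have hZIlb : A - (2*(n:ℝ)) ^ (-p) / 2 ≤ Z - I := by linarith
  have hΛpos : 0 < Λ := by
    have h1 : (7:ℝ)/8 ≤ Z - I := by linarith
    have h2 : (2/(n:ℝ)) * un1 ≤ un1 := by
      have hh : 2/(n:ℝ) ≤ 1 := by rw [div_le_one hn0]; linarith
      have := mul_le_mul_of_nonneg_right hh hun1pos.le
      linarith
    have h3 : (1:ℝ) ≤ 1 + 2/(n:ℝ)^2 := by
      have : (0:ℝ) < 2/(n:ℝ)^2 := by positivity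
      linarith
    have h4 : (1:ℝ) * (7/8) ≤ (1 + 2/(n:ℝ)^2) * (Z - I) :=
      mul_le_mul h3 h1 (by norm_num) (by linarith)
    rw [hΛ]
    linarith
  have hΛR : Λ < R := by
    have e1 : (n:ℝ)^2 * Λ = ((n:ℝ)^2 + 2) * (Z - I) - 2*(n:ℝ)*un1 := by
      rw [hΛ]; field_simp
    have e2 : (n:ℝ)^2 * R = 2*(n:ℝ)^2*A - (n:ℝ)*D := by
      rw [hR]; field_simp
    have key : (n:ℝ)^2 * Λ < (n:ℝ)^2 * R := by
      rw [e1, e2]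
      have h5 : ((n:ℝ)^2 + 2) * (Z - I) < ((n:ℝ)^2 + 2) * A :=
        mul_lt_mul_of_pos_left hZIub (by positivity)
      nlinarith [habel, h5]
    exact lt_of_mul_lt_mul_left key (by positivity)
  have hBR : S / (n:ℝ) = 2^p * R := by
    rw [hSeq, hR]; field_simp
  -- lower bound inner expression equals 2^p * Λ
  have em : (2*(n:ℝ)) ^ (1-p) = 2 ^ (1-p) * (n:ℝ) ^ (1-p) :=
    Real.mul_rpow (by norm_num) hn0.le
  have e2p : (2:ℝ) ^ p * 2 ^ (1-p) = 2 := by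
    rw [← Real.rpow_add two_pos]
    norm_num
  have enp : (n:ℝ) ^ (p+1) * (n:ℝ) ^ (1-p) = (n:ℝ)^2 := by
    rw [← Real.rpow_add hn0, show p+1+(1-p) = (2:ℝ) by ring,
      show ((2:ℝ)) = ((2:ℕ):ℝ) by norm_num, Real.rpow_natCast]
  have hnp1 : (0:ℝ) < (n:ℝ) ^ (p+1) := Real.rpow_pos_of_pos hn0 _
  have hn1p : (0:ℝ) < (n:ℝ) ^ (1-p) := Real.rpow_pos_of_pos hn0 _
  have eq0 : (2:ℝ)^p * I = (n:ℝ) ^ (1-p) / (p-1) := by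
    rw [hI, em]
    field_simp
    linear_combination e2p
  have eq1 : ((n:ℝ)^2 + 2) / ((p-1) * (n:ℝ)^(p+1)) = (1 + 2/(n:ℝ)^2) * (2^p * I) := by
    rw [eq0]
    field_simp
    linear_combination (-1:ℝ) * enp
  have h2n1p : (0:ℝ) < (2*(n:ℝ)-1) ^ p := Real.rpow_pos_of_pos (by linarith) _
  have eq2 : (2:ℝ)^(p+1) / ((n:ℝ) * (2*(n:ℝ)-1)^p) = 2^p * ((2/(n:ℝ)) * un1) := by
    rw [hun1eq, Real.rpow_neg (by linarith), Real.rpow_add two_pos, Real.rpow_one]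
    field_simp
  have hzeta := zeta_identity p hp
  rw [← hZ] at hzeta
  have hLeq : (1 + 2 / (n : ℝ) ^ 2) * ((2 ^ p - 1) * zetaR p) -
      (((n : ℝ) ^ 2 + 2) / ((p - 1) * (n : ℝ) ^ (p + 1)) +
        2 ^ (p + 1) / ((n : ℝ) * (2 * (n : ℝ) - 1) ^ p)) = 2^p * Λ := by
    rw [hzeta, eq1, eq2, hΛ]
    ring
  -- lpNorm rewriting
  have hLB : 2^p * Λ < S / (n:ℝ) := by
    rw [hBR]
    exact (mul_lt_mul_iff_right₀ h2p).mpr hΛR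
  have hSn_pos : 0 < S / (n:ℝ) := lt_trans (by positivity) hLB
  have hlp : (n : ℝ) ^ (-(1 / p)) * lpNorm n p = (S / (n:ℝ)) ^ (1/p) := by
    rw [lpNorm, ← hSdef, Real.div_rpow (by positivity) hn0.le, Real.rpow_neg hn0.le]
    ring
  have hinvp : (0:ℝ) < 1/p := by positivity
  constructor
  · rw [hLeq, hlp]
    exact Real.rpow_lt_rpow (by positivity) hLB hinvp
  · -- upper bound
    set X : ℝ := (2 ^ p - 1) * zetaR p - 2 ^ (p - 1) / ((p - 1) * (2 * (n : ℝ) + 1) ^ (p - 1))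
      with hX
    have h2n1 : (0:ℝ) < (2*(n:ℝ)+1) ^ (p-1) := Real.rpow_pos_of_pos (by linarith) _
    have eqc2 : (2:ℝ)^(p-1) / ((p-1) * (2*(n:ℝ)+1)^(p-1)) = 2^p * c2 := by
      rw [hc2, show (1:ℝ)-p = -(p-1) by ring, Real.rpow_neg (by linarith : (0:ℝ) ≤ 2*(n:ℝ)+1),
        show (2:ℝ)^p = 2^(p-1) * 2 by
          rw [← Real.rpow_add_one (by norm_num : (2:ℝ) ≠ 0) (p-1)]; norm_num]
      field_simp
    have hXeq : X = 2^p * (Z - c2) := by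
      rw [hX, hzeta, eqc2]; ring
    have hAZc : A ≤ Z - c2 := by linarith
    have hfac : (0:ℝ) < 2 - 1/(n:ℝ) := by
      have : 1/(n:ℝ) ≤ 1/2 := by
        rw [div_le_div_iff₀ hn0 (by norm_num)]; linarith
      linarith
    have hADlt : A < D := by linarith [hAD, uu_pos p 1]
    have hRlt : R < (2 - 1/(n:ℝ)) * (Z - c2) := by
      have h1 : A/(n:ℝ) < D/(n:ℝ) := by gcongr
      have hmul : (2 - 1/(n:ℝ)) * A ≤ (2 - 1/(n:ℝ)) * (Z - c2) :=
        mul_le_mul_of_nonneg_left hAZc hfac.le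
      have e : (2 - 1/(n:ℝ)) * A = 2*A - A/(n:ℝ) := by ring
      rw [hR]
      linarith
    have hSnX : S/(n:ℝ) < (2 - 1/(n:ℝ)) * X := by
      rw [hBR, hXeq]
      calc 2^p * R < 2^p * ((2 - 1/(n:ℝ)) * (Z - c2)) := (mul_lt_mul_iff_right₀ h2p).mpr hRlt
        _ = (2 - 1/(n:ℝ)) * (2^p * (Z - c2)) := by ring
    have hXpos : (0:ℝ) ≤ X := by
      rw [hXeq]
      have : (0:ℝ) ≤ Z - c2 := by linarith
      positivity
    rw [hlp]
    calc (S/(n:ℝ)) ^ (1/p) < ((2 - 1/(n:ℝ)) * X) ^ (1/p) :=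
          Real.rpow_lt_rpow hSn_pos.le hSnX hinvp
      _ = (2 - 1/(n:ℝ)) ^ (1/p) * X ^ (1/p) := Real.mul_rpow hfac.le hXpos
end

section
/- Define g(p) = 3 − 2^p + 3^{−p} − (2/3)^p for p ≥ 1. Then g is strictly decreasing on [1, ∞), there is a unique δ ∈ (1, 2) with g(δ) = 0 (equivalently, δ is the unique root of 2^δ + 6^δ = 3^{δ+1} + 1), g(p) > 0 for 1 ≤ p < δ, and g(p) < 0 for p > δ. -/
open Finset Real Filter

noncomputable def g (p : ℝ) : ℝ := 3 - 2 ^ p + 3 ^ (-p) - (2 / 3) ^ p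


lemma hasDerivAt_g (p : ℝ) :
    HasDerivAt g (-(2 ^ p * Real.log 2) + -((3:ℝ) ^ (-p) * Real.log 3) - ((2:ℝ)/3) ^ p * Real.log (2/3)) p := by
  have h2 : HasDerivAt (fun x : ℝ => (2:ℝ) ^ x) ((2:ℝ) ^ p * Real.log 2) p :=
    (Real.hasStrictDerivAt_const_rpow (by norm_num) p).hasDerivAt
  have h3 : HasDerivAt (fun x : ℝ => (3:ℝ) ^ (-x)) (-((3:ℝ) ^ (-p) * Real.log 3)) p := by
    have := ((Real.hasStrictDerivAt_const_rpow (show (0:ℝ) < 3 by norm_num) (-p)).hasDerivAt).comp p (hasDerivAt_neg p)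
    simpa [mul_comm, Function.comp_def] using this
  have h23 : HasDerivAt (fun x : ℝ => ((2:ℝ)/3) ^ x) (((2:ℝ)/3) ^ p * Real.log (2/3)) p :=
    (Real.hasStrictDerivAt_const_rpow (by norm_num) p).hasDerivAt
  have := (((hasDerivAt_const p (3:ℝ)).sub h2).add h3).sub h23
  convert this using 1
  · rfl
  · rfl
  · rfl
  · ring

lemma deriv_g_neg {p : ℝ} (hp : 0 < p) :
    -(2 ^ p * Real.log 2) + -((3:ℝ) ^ (-p) * Real.log 3) - ((2:ℝ)/3) ^ p * Real.log (2/3) < 0 := by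
  have hlog : Real.log (2/3) = Real.log 2 - Real.log 3 :=
    Real.log_div (by norm_num) (by norm_num)
  have hb : ((2:ℝ)/3) ^ p < 2 ^ p := Real.rpow_lt_rpow (by norm_num) (by norm_num) hp
  have h4 : Real.log 3 < 2 * Real.log 2 := by
    have h := Real.log_lt_log (by norm_num) (show (3:ℝ) < 4 by norm_num)
    have : Real.log 4 = 2 * Real.log 2 := by
      rw [show (4:ℝ) = 2 ^ 2 by norm_num, Real.log_pow]; push_cast; ring
    linarith
  have hl2 : (0:ℝ) < Real.log 2 := Real.log_pos (by norm_num)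
  have hl3 : (0:ℝ) < Real.log 3 := Real.log_pos (by norm_num)
  have hpos3 : (0:ℝ) < (3:ℝ) ^ (-p) := Real.rpow_pos_of_pos (by norm_num) _
  have hposb : (0:ℝ) < ((2:ℝ)/3) ^ p := Real.rpow_pos_of_pos (by norm_num) _
  rw [hlog]
  nlinarith [mul_lt_mul_of_pos_right hb hl2, mul_pos hpos3 hl3,
    mul_lt_mul_of_pos_left h4 hposb]

lemma g_anti : StrictAntiOn g (Set.Ici 1) := by
  apply strictAntiOn_of_deriv_neg (convex_Ici 1)
    (fun x _ => (hasDerivAt_g x).continuousAt.continuousWithinAt)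
  intro x hx
  rw [interior_Ici] at hx
  rw [(hasDerivAt_g x).deriv]
  exact deriv_g_neg (lt_trans one_pos hx)

lemma g_one : g 1 = 2 / 3 := by
  simp only [g, Real.rpow_one, Real.rpow_neg_one]
  norm_num

lemma g_two : g 2 = -(4/3) := by
  have h1 : (2:ℝ) ^ (2:ℝ) = 4 := by
    rw [show (2:ℝ) = ((2:ℕ):ℝ) by norm_num, Real.rpow_natCast]; norm_num
  have h2 : (3:ℝ) ^ (-(2:ℝ)) = 1/9 := by
    rw [Real.rpow_neg (by norm_num), show (2:ℝ) = ((2:ℕ):ℝ) by norm_num,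
      Real.rpow_natCast]; norm_num
  have h3 : ((2:ℝ)/3) ^ (2:ℝ) = 4/9 := by
    rw [show (2:ℝ) = ((2:ℕ):ℝ) by norm_num, Real.rpow_natCast]; norm_num
  simp only [g, h1, h2, h3]
  norm_num

theorem stmt_5 :
    StrictAntiOn g (Set.Ici 1) ∧
    (∃! δ : ℝ, δ ∈ Set.Ioo (1 : ℝ) 2 ∧ g δ = 0) ∧
    ∀ δ : ℝ, δ ∈ Set.Ioo (1 : ℝ) 2 → g δ = 0 →
      ((2 : ℝ) ^ δ + 6 ^ δ = 3 ^ (δ + 1) + 1) ∧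
      (∀ p : ℝ, 1 ≤ p → p < δ → 0 < g p) ∧
      (∀ p : ℝ, δ < p → g p < 0) := by
  have hanti := g_anti
  refine ⟨hanti, ?_, ?_⟩
  · -- existence & uniqueness
    have hcont : ContinuousOn g (Set.Icc 1 2) := fun x _ =>
      (hasDerivAt_g x).continuousAt.continuousWithinAt
    have hsub : Set.Ioo (g 2) (g 1) ⊆ g '' Set.Ioo 1 2 :=
      intermediate_value_Ioo' (by norm_num) hcont
    have h0 : (0:ℝ) ∈ Set.Ioo (g 2) (g 1) := by rw [g_one, g_two]; constructor <;> norm_num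
    obtain ⟨δ, hδmem, hδ0⟩ := hsub h0
    refine ⟨δ, ⟨hδmem, hδ0⟩, ?_⟩
    rintro y ⟨hymem, hy0⟩
    exact hanti.injOn (Set.mem_Ici.2 hymem.1.le) (Set.mem_Ici.2 hδmem.1.le) (hy0.trans hδ0.symm)
  · rintro δ ⟨h1δ, hδ2⟩ hδ0
    refine ⟨?_, ?_, ?_⟩
    · have h3pos : (0:ℝ) < (3:ℝ) ^ δ := Real.rpow_pos_of_pos (by norm_num) _
      have e1 : (3:ℝ) ^ δ * (2:ℝ) ^ δ = 6 ^ δ := by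
        rw [← Real.mul_rpow (by norm_num) (by norm_num)]; norm_num
      have e2 : (3:ℝ) ^ δ * (3:ℝ) ^ (-δ) = 1 := by
        rw [← Real.rpow_add (by norm_num)]; simp
      have e3 : (3:ℝ) ^ δ * ((2:ℝ)/3) ^ δ = 2 ^ δ := by
        rw [← Real.mul_rpow (by norm_num) (by norm_num)]; norm_num
      have e4 : (3:ℝ) ^ (δ + 1) = 3 ^ δ * 3 := by
        rw [Real.rpow_add (by norm_num), Real.rpow_one]
      have := congrArg (fun x => (3:ℝ) ^ δ * x) hδ0
      simp only [g, mul_zero, mul_sub, mul_add, e1, e2, e3] at this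
      rw [e4]; linarith
    · intro p hp hpδ
      have := hanti (Set.mem_Ici.2 hp) (Set.mem_Ici.2 h1δ.le) hpδ
      linarith [hδ0 ▸ this]
    · intro p hδp
      have := hanti (Set.mem_Ici.2 h1δ.le) (Set.mem_Ici.2 (h1δ.le.trans hδp.le)) hδp
      linarith [hδ0 ▸ this]
end

section
/- Let p ≥ 1 and n ≥ 1. Then n^{−1} ‖T_n‖_{p,1} ≤ (n+1)^{−1} ‖T_{n+1}‖_{p,1}; that is, the sequence n ↦ n^{−1} ‖T_n‖_{p,1} is nondecreasing. -/
open Finset Real Filter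

/-- auxiliary: the `p`-th power of the absolute value of the `(a,b)` entry. -/
noncomputable def Fent (p : ℝ) (a b : ℕ) : ℝ := |2 / (1 + 2 * ((a : ℝ) - (b : ℝ)))| ^ p

/-- auxiliary: the ℓ_p norm of column `j` of `T_n`. -/
noncomputable def Gcol (p : ℝ) (n j : ℕ) : ℝ := (∑ i ∈ Finset.range n, Fent p i j) ^ (1 / p)

lemma Fent_nonneg (p : ℝ) (a b : ℕ) : 0 ≤ Fent p a b :=
  Real.rpow_nonneg (abs_nonneg _) _

lemma Gcol_nonneg (p : ℝ) (n j : ℕ) : 0 ≤ Gcol p n j :=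
  Real.rpow_nonneg (Finset.sum_nonneg fun i _ => Fent_nonneg p i j) _

lemma Fent_succ_succ (p : ℝ) (a b : ℕ) : Fent p (a + 1) (b + 1) = Fent p a b := by
  unfold Fent
  congr 2
  push_cast
  ring

lemma Gcol_le_a (p : ℝ) (hp : 1 ≤ p) (n j : ℕ) : Gcol p n j ≤ Gcol p (n + 1) j := by
  apply Real.rpow_le_rpow (Finset.sum_nonneg fun i _ => Fent_nonneg p i j)
  · rw [Finset.sum_range_succ]
    exact le_add_of_nonneg_right (Fent_nonneg p n j)
  · have : (0:ℝ) < p := by linarith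
    positivity

lemma Gcol_le_b (p : ℝ) (hp : 1 ≤ p) (n j : ℕ) : Gcol p n j ≤ Gcol p (n + 1) (j + 1) := by
  apply Real.rpow_le_rpow (Finset.sum_nonneg fun i _ => Fent_nonneg p i j)
  · rw [Finset.sum_range_succ']
    have : ∑ i ∈ Finset.range n, Fent p i j
        = ∑ i ∈ Finset.range n, Fent p (i + 1) (j + 1) := by
      exact Finset.sum_congr rfl fun i _ => (Fent_succ_succ p i j).symm
    rw [this]
    exact le_add_of_nonneg_right (Fent_nonneg p 0 (j + 1))
  · have : (0:ℝ) < p := by linarith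
    positivity

lemma lpq_eq (p : ℝ) (n : ℕ) : lpqNorm n p 1 = ∑ j ∈ Finset.range n, Gcol p n j := by
  unfold lpqNorm Gcol
  rw [one_div_one, Real.rpow_one]
  rw [← Fin.sum_univ_eq_sum_range (fun j => (∑ i ∈ Finset.range n, Fent p i j) ^ (1 / p)) n]
  apply Finset.sum_congr rfl
  intro j _
  congr 1
  rw [← Fin.sum_univ_eq_sum_range (fun i => Fent p i (j : ℕ)) n]
  rfl

theorem stmt_7 (p : ℝ) (hp : 1 ≤ p) (n : ℕ) (hn : 1 ≤ n) :
    (n : ℝ)⁻¹ * lpqNorm n p 1 ≤ ((n : ℝ) + 1)⁻¹ * lpqNorm (n + 1) p 1 := by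
  rw [lpq_eq, lpq_eq]
  set a := ∑ j ∈ Finset.range n, Gcol p n j with ha
  set b := ∑ j ∈ Finset.range (n + 1), Gcol p (n + 1) j with hb
  -- choose an argmax column m of T_n
  obtain ⟨m, hm, hmax⟩ := Finset.exists_max_image (Finset.range n) (Gcol p n)
    ⟨0, Finset.mem_range.mpr hn⟩
  have hmn : m < n := Finset.mem_range.mp hm
  -- a ≤ n * Gcol p n m
  have h1 : a ≤ (n : ℝ) * Gcol p n m := by
    calc a ≤ ∑ _j ∈ Finset.range n, Gcol p n m :=
          Finset.sum_le_sum fun j hj => hmax j hj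
      _ = (n : ℝ) * Gcol p n m := by
          rw [Finset.sum_const, Finset.card_range, nsmul_eq_mul]
  -- split b at m
  have hsplit : b = ∑ j ∈ Finset.range (m + 1), Gcol p (n + 1) j
      + ∑ j ∈ Finset.Ico (m + 1) (n + 1), Gcol p (n + 1) j := by
    rw [hb, Finset.range_eq_Ico,
      ← Finset.sum_Ico_consecutive _ (Nat.zero_le (m + 1)) (by omega : m + 1 ≤ n + 1), Finset.range_eq_Ico]
  have part1 : ∑ j ∈ Finset.range (m + 1), Gcol p n j
      ≤ ∑ j ∈ Finset.range (m + 1), Gcol p (n + 1) j :=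
    Finset.sum_le_sum fun j _ => Gcol_le_a p hp n j
  have part2 : ∑ j ∈ Finset.Ico m n, Gcol p n j
      ≤ ∑ j ∈ Finset.Ico (m + 1) (n + 1), Gcol p (n + 1) j := by
    have hre : ∑ j ∈ Finset.Ico (m + 1) (n + 1), Gcol p (n + 1) j
        = ∑ j ∈ Finset.Ico m n, Gcol p (n + 1) (j + 1) := by
      rw [Finset.sum_Ico_eq_sum_range, Finset.sum_Ico_eq_sum_range]
      have hc : n + 1 - (m + 1) = n - m := by omega
      rw [hc]
      exact Finset.sum_congr rfl fun i _ => by rw [Nat.add_right_comm]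
    rw [hre]
    exact Finset.sum_le_sum fun j _ => Gcol_le_b p hp n j
  -- recombine: a + Gcol p n m ≤ b
  have hrecomb : ∑ j ∈ Finset.range (m + 1), Gcol p n j + ∑ j ∈ Finset.Ico m n, Gcol p n j
      = a + Gcol p n m := by
    have e1 : ∑ j ∈ Finset.Ico m n, Gcol p n j
        = Gcol p n m + ∑ j ∈ Finset.Ico (m + 1) n, Gcol p n j :=
      Finset.sum_eq_sum_Ico_succ_bot hmn _
    have e2 : ∑ j ∈ Finset.range (m + 1), Gcol p n j + ∑ j ∈ Finset.Ico (m + 1) n, Gcol p n j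
        = a := by
      rw [ha, Finset.range_eq_Ico, Finset.range_eq_Ico]
      exact Finset.sum_Ico_consecutive _ (Nat.zero_le _) (by omega)
    linarith
  have h2 : a + Gcol p n m ≤ b := by
    rw [← hrecomb, hsplit]
    exact add_le_add part1 part2
  -- finish
  have hnpos : (0 : ℝ) < n := by exact_mod_cast hn
  have hbpos : (0 : ℝ) < (n : ℝ) + 1 := by linarith
  rw [inv_mul_eq_div, inv_mul_eq_div, div_le_div_iff₀ hnpos hbpos]
  nlinarith [h1, h2, hnpos]
end

section
/- Let 1 ≤ p < q < ∞ and let n ≥ 3. Then n^{−1/q} ‖T_n‖_{p,q} ≥ 4 (1/(2^p − 1))^{1/p}. -/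
open Finset Real Filter

lemma log32_le_half : Real.log (3/2) ≤ 1/2 := by
  have h2 : Real.log ((3/2:ℝ)^(2:ℕ)) ≤ 1 := by
    rw [Real.log_le_iff_le_exp (by norm_num)]
    have := Real.exp_one_gt_d9
    norm_num at this ⊢
    linarith
  rw [Real.log_pow] at h2
  push_cast at h2
  linarith

lemma two_rpow_lb {p : ℝ} (hp : 1 ≤ p) : 2 + 1.38 * (p - 1) ≤ (2:ℝ) ^ p := by
  have h1 : (2:ℝ)^p = 2^(1:ℝ) * 2^(p-1) := by
    rw [← Real.rpow_add (by norm_num : (0:ℝ) < 2)]; ring_nf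
  have h3 : 1 + Real.log 2 * (p-1) ≤ (2:ℝ)^(p-1) := by
    rw [Real.rpow_def_of_pos (by norm_num)]
    linarith [Real.add_one_le_exp (Real.log 2 * (p-1))]
  have hl : (0.6931471803:ℝ) < Real.log 2 := Real.log_two_gt_d9
  rw [h1, Real.rpow_one]
  nlinarith [sub_nonneg.2 hp]

lemma tt_rpow_lb {p : ℝ} (hp : 1 ≤ p) : 2/3 - (p-1)/3 ≤ ((2:ℝ)/3) ^ p := by
  have h1 : ((2:ℝ)/3)^p = (2/3)^(1:ℝ) * (2/3)^(p-1) := by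
    rw [← Real.rpow_add (by norm_num : (0:ℝ) < 2/3)]; ring_nf
  have h3 : 1 + Real.log (2/3) * (p-1) ≤ ((2:ℝ)/3)^(p-1) := by
    rw [Real.rpow_def_of_pos (by norm_num)]
    linarith [Real.add_one_le_exp (Real.log (2/3) * (p-1))]
  have h4 : Real.log (2/3) = - Real.log (3/2) := by
    rw [← Real.log_inv]; norm_num
  have h5 := log32_le_half
  have h6 : Real.log (3/2) > 0 := Real.log_pos (by norm_num)
  rw [h1, Real.rpow_one]
  nlinarith [sub_nonneg.2 hp]

lemma key_total {p : ℝ} (hp : 1 ≤ p) {n : ℕ} (hn : 3 ≤ n) :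
    (n:ℝ) * ((4:ℝ)^p * (1/(2^p - 1))) ≤ (2*(n:ℝ)-1) * 2^p + (2*(n:ℝ)-3) * ((2:ℝ)/3)^p := by
  set t := (2:ℝ)^p with ht
  set σ := ((2:ℝ)/3)^p with hσ
  have ht2 : (2:ℝ) ≤ t := by
    rw [ht]
    calc (2:ℝ) = 2^(1:ℝ) := (Real.rpow_one 2).symm
    _ ≤ 2^p := by
        rw [Real.rpow_le_rpow_left_iff (by norm_num)]; exact hp
  have htl : 2 + 1.38 * (p-1) ≤ t := two_rpow_lb hp
  have hσl : 2/3 - (p-1)/3 ≤ σ := tt_rpow_lb hp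
  have hσ0 : (0:ℝ) ≤ σ := Real.rpow_nonneg (by norm_num) p
  have h4 : (4:ℝ)^p = t * t := by
    rw [ht, ← Real.rpow_add (by norm_num : (0:ℝ) < 2)]
    rw [show (4:ℝ) = 2^(2:ℕ) by norm_num, ← Real.rpow_natCast 2 2,
        ← Real.rpow_mul (by norm_num : (0:ℝ) ≤ 2)]
    norm_num; ring_nf
  have ht1 : (0:ℝ) < t - 1 := by linarith
  have hu : 0 ≤ p - 1 := by linarith
  rw [h4, mul_one_div, ← mul_div_assoc, div_le_iff₀ ht1]
  have h3 : 3*(t*t) ≤ (5*t + 3*σ)*(t-1) := by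
    nlinarith [mul_nonneg (sub_nonneg.2 htl) hu, mul_nonneg (sub_nonneg.2 htl) (sub_nonneg.2 ht2),
      mul_nonneg (sub_nonneg.2 hσl) (by linarith : (0:ℝ) ≤ t - 1), sq_nonneg (p-1),
      mul_nonneg hu hu, mul_nonneg hσ0 hu]
  have hinc : t*t ≤ (2*t + 2*σ)*(t-1) := by nlinarith
  have hn3 : (3:ℝ) ≤ (n:ℝ) := by exact_mod_cast hn
  nlinarith [mul_nonneg (sub_nonneg.2 hn3) (sub_nonneg.2 hinc)]

lemma colBound (p : ℝ) (n k : ℕ) (hn : 3 ≤ n) (hk : k < n) :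
    2*(2:ℝ)^p + 2*((2:ℝ)/3)^p - (if k = 0 then (2:ℝ)^p + ((2:ℝ)/3)^p else 0)
      - (if k = 1 then ((2:ℝ)/3)^p else 0) - (if k = n-1 then ((2:ℝ)/3)^p else 0)
    ≤ ∑ i ∈ Finset.range n, |2 / (1 + 2*((i:ℝ) - (k:ℝ)))| ^ p := by
  set f : ℕ → ℝ := fun i => |2 / (1 + 2*((i:ℝ) - (k:ℝ)))| ^ p with hf
  have ediag : f k = (2:ℝ)^p := by
    rw [hf]; norm_num
  have esub : 1 ≤ k → f (k-1) = (2:ℝ)^p := by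
    intro h1
    have c1 : ((k-1:ℕ):ℝ) = (k:ℝ) - 1 := by push_cast [Nat.cast_sub h1]; ring
    rw [hf]; simp only [c1]
    rw [show (1 + 2*(((k:ℝ) - 1) - (k:ℝ))) = -1 by ring]
    norm_num
  have esup : f (k+1) = ((2:ℝ)/3)^p := by
    rw [hf]; push_cast
    rw [show (1 + 2*(((k:ℝ) + 1) - (k:ℝ))) = 3 by ring]
    rw [show |2/(3:ℝ)| = 2/3 by norm_num]
  have esub2 : 2 ≤ k → f (k-2) = ((2:ℝ)/3)^p := by
    intro h2
    have c1 : ((k-2:ℕ):ℝ) = (k:ℝ) - 2 := by push_cast [Nat.cast_sub h2]; ring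
    rw [hf]; simp only [c1]
    rw [show (1 + 2*(((k:ℝ) - 2) - (k:ℝ))) = -3 by ring]
    rw [show |2/(-3:ℝ)| = 2/3 by norm_num]
  rcases Nat.lt_or_ge k 2 with hk2 | hk2
  · interval_cases k
    · rw [if_pos rfl, if_neg (by omega), if_neg (by omega)]
      have hsub : ({0, 1} : Finset ℕ) ⊆ Finset.range n := by
        intro x hx; simp only [Finset.mem_insert, Finset.mem_singleton] at hx
        simp only [Finset.mem_range]; omega
      have := Finset.sum_le_sum_of_subset_of_nonneg hsub
        (fun i _ _ => Real.rpow_nonneg (abs_nonneg _) p) (f := f)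
      rw [Finset.sum_pair (by omega)] at this
      have e0 : f 0 = (2:ℝ)^p := by simpa using ediag
      have e1 : f 1 = ((2:ℝ)/3)^p := by simpa using esup
      rw [e0, e1] at this
      linarith
    · rw [if_neg (by omega), if_pos rfl, if_neg (by omega)]
      have hsub : ({0, 1, 2} : Finset ℕ) ⊆ Finset.range n := by
        intro x hx; simp only [Finset.mem_insert, Finset.mem_singleton] at hx
        simp only [Finset.mem_range]; omega
      have := Finset.sum_le_sum_of_subset_of_nonneg hsub
        (fun i _ _ => Real.rpow_nonneg (abs_nonneg _) p) (f := f)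
      rw [Finset.sum_insert (by simp), Finset.sum_pair (by omega)] at this
      have e0 : f 0 = (2:ℝ)^p := by simpa using (esub (le_refl 1))
      have e1 : f 1 = (2:ℝ)^p := by simpa using ediag
      have e2 : f 2 = ((2:ℝ)/3)^p := by simpa using esup
      rw [e0, e1, e2] at this
      linarith
  · by_cases hke : k = n - 1
    · rw [if_neg (by omega), if_neg (by omega), if_pos hke]
      have hsub : ({k-2, k-1, k} : Finset ℕ) ⊆ Finset.range n := by
        intro x hx; simp only [Finset.mem_insert, Finset.mem_singleton] at hx
        simp only [Finset.mem_range]; omega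
      have := Finset.sum_le_sum_of_subset_of_nonneg hsub
        (fun i _ _ => Real.rpow_nonneg (abs_nonneg _) p) (f := f)
      rw [Finset.sum_insert (by simp; omega), Finset.sum_pair (by omega)] at this
      rw [esub2 hk2, esub (by omega), ediag] at this
      linarith
    · rw [if_neg (by omega), if_neg (by omega), if_neg hke]
      have hsub : ({k-2, k-1, k, k+1} : Finset ℕ) ⊆ Finset.range n := by
        intro x hx; simp only [Finset.mem_insert, Finset.mem_singleton] at hx
        simp only [Finset.mem_range]; omega
      have := Finset.sum_le_sum_of_subset_of_nonneg hsub
        (fun i _ _ => Real.rpow_nonneg (abs_nonneg _) p) (f := f)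
      rw [Finset.sum_insert (by simp; omega), Finset.sum_insert (by simp; omega),
          Finset.sum_pair (by omega)] at this
      rw [esub2 hk2, esub (by omega), ediag, esup] at this
      linarith

theorem stmt_9 (p q : ℝ) (hp : 1 ≤ p) (hpq : p < q) (n : ℕ) (hn : 3 ≤ n) :
    4 * (1 / (2 ^ p - 1)) ^ (1 / p) ≤ (n : ℝ) ^ (-(1 / q)) * lpqNorm n p q := by
  have hp0 : (0:ℝ) < p := lt_of_lt_of_le one_pos hp
  have hq0 : (0:ℝ) < q := lt_trans hp0 hpq
  have hn0 : (0:ℝ) < (n:ℝ) := by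
    have : 0 < n := by omega
    exact_mod_cast this
  have ht2 : (2:ℝ) ≤ 2^p := by
    calc (2:ℝ) = 2^(1:ℝ) := (Real.rpow_one 2).symm
    _ ≤ 2^p := by rw [Real.rpow_le_rpow_left_iff (by norm_num)]; exact hp
  have ht1 : (0:ℝ) < 2^p - 1 := by linarith
  set M : ℝ := (4:ℝ)^p * (1/(2^p - 1)) with hM
  have hM0 : (0:ℝ) ≤ M := by
    apply mul_nonneg (Real.rpow_nonneg (by norm_num) p)
    positivity
  set S : Fin n → ℝ := fun j => ∑ i : Fin n, |cauchyToeplitz n i j| ^ p with hS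
  have hS0 : ∀ j : Fin n, 0 ≤ S j :=
    fun j => Finset.sum_nonneg fun i _ => Real.rpow_nonneg (abs_nonneg _) p
  set A : ℝ := (2:ℝ)^p with hA
  set B : ℝ := ((2:ℝ)/3)^p with hB
  set LB : ℕ → ℝ := fun k =>
    2*A + 2*B - (if k = 0 then A + B else 0)
      - (if k = 1 then B else 0) - (if k = n-1 then B else 0) with hLB
  have hcol : ∀ j : Fin n, LB (j:ℕ) ≤ S j := by
    intro j
    have h1 : S j = ∑ i ∈ Finset.range n, |2 / (1 + 2*((i:ℝ) - ((j:ℕ):ℝ)))| ^ p := by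
      rw [hS]
      simp only [cauchyToeplitz]
      exact Fin.sum_univ_eq_sum_range (fun i => |2 / (1 + 2*((i:ℝ) - ((j:ℕ):ℝ)))| ^ p) n
    rw [h1, hLB]
    exact colBound p n (j:ℕ) hn j.isLt
  have hsumLB : ∑ j : Fin n, LB (j:ℕ) = (2*(n:ℝ)-1) * A + (2*(n:ℝ)-3) * B := by
    rw [Fin.sum_univ_eq_sum_range LB n, hLB]
    simp only [Finset.sum_sub_distrib, Finset.sum_const, Finset.card_range, nsmul_eq_mul,
      Finset.sum_ite_eq', Finset.mem_range]
    rw [if_pos (by omega), if_pos (by omega), if_pos (by omega)]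
    ring
  have hT : (n:ℝ) * M ≤ ∑ j : Fin n, S j := by
    calc (n:ℝ) * M ≤ (2*(n:ℝ)-1) * A + (2*(n:ℝ)-3) * B := key_total hp hn
    _ = ∑ j : Fin n, LB (j:ℕ) := hsumLB.symm
    _ ≤ ∑ j : Fin n, S j := Finset.sum_le_sum fun j _ => hcol j
  -- convexity step
  have hs1 : 1 ≤ q / p := (one_le_div hp0).2 hpq.le
  have hw1 : ∑ _j : Fin n, (1/(n:ℝ)) = 1 := by
    rw [Finset.sum_const, Finset.card_univ, Fintype.card_fin, nsmul_eq_mul]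
    field_simp
  have hconv := Real.rpow_arith_mean_le_arith_mean_rpow Finset.univ
    (fun _ : Fin n => 1/(n:ℝ)) S (fun i _ => by positivity) hw1 (fun i _ => hS0 i) hs1
  have hMle : M ≤ ∑ j : Fin n, (1/(n:ℝ)) * S j := by
    have h1 : ∑ j : Fin n, (1/(n:ℝ)) * S j = (∑ j : Fin n, S j) / n := by
      rw [← Finset.mul_sum]; ring
    rw [h1, le_div_iff₀ hn0]
    linarith [hT]
  have h2 : M^(q/p) ≤ ∑ j : Fin n, (1/(n:ℝ)) * S j ^ (q/p) :=
    le_trans (Real.rpow_le_rpow hM0 hMle (by positivity)) hconv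
  have h3 : (n:ℝ) * M^(q/p) ≤ ∑ j : Fin n, S j ^ (q/p) := by
    have h1 : ∑ j : Fin n, (1/(n:ℝ)) * S j ^ (q/p) = (∑ j : Fin n, S j ^ (q/p)) / n := by
      rw [← Finset.mul_sum]; ring
    rw [h1, le_div_iff₀ hn0] at h2
    linarith [h2]
  have h4 : ((n:ℝ) * M^(q/p))^(1/q) ≤ lpqNorm n p q := by
    rw [lpqNorm]
    apply Real.rpow_le_rpow (by positivity) h3 (by positivity)
  have h5 : ((n:ℝ) * M^(q/p))^(1/q) = (n:ℝ)^(1/q) * M^(1/p) := by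
    rw [Real.mul_rpow (le_of_lt hn0) (Real.rpow_nonneg hM0 _), ← Real.rpow_mul hM0,
      show q/p*(1/q) = 1/p by
        rw [div_mul_div_comm, mul_one, mul_comm p q, div_mul_eq_div_div,
          div_self (ne_of_gt hq0)]]
  have h6 : M^(1/p) = 4 * (1 / (2^p - 1))^(1/p) := by
    rw [hM, Real.mul_rpow (Real.rpow_nonneg (by norm_num) p) (by positivity),
      ← Real.rpow_mul (by norm_num : (0:ℝ) ≤ 4), mul_one_div_cancel (ne_of_gt hp0),
      Real.rpow_one]
  have h7 : (n:ℝ)^(-(1/q)) * ((n:ℝ)^(1/q) * M^(1/p)) = M^(1/p) := by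
    rw [← mul_assoc, ← Real.rpow_add hn0]
    norm_num
  calc 4 * (1 / (2^p - 1))^(1/p) = M^(1/p) := h6.symm
  _ = (n:ℝ)^(-(1/q)) * ((n:ℝ)^(1/q) * M^(1/p)) := h7.symm
  _ ≤ (n:ℝ)^(-(1/q)) * lpqNorm n p q := by
      apply mul_le_mul_of_nonneg_left _ (Real.rpow_nonneg (le_of_lt hn0) _)
      rw [← h5]; exact h4
end

section
/- For all p ≥ 1, the inequality 2^{p+1} − 5 + 3·(2/3)^p + (2/5)^p − 3·3^{−p} − 5^{−p} > 0 holds; equivalently, 3^{−1/p} ‖T_3‖_p > 4 (1/(2^p − 1))^{1/p} for all p ≥ 1. -/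
open Finset Real Filter

lemma aux_part1 (p : ℝ) (hp : 1 ≤ p) :
    0 < 2 ^ (p + 1) - 5 + 3 * (2 / 3) ^ p + (2 / 5) ^ p
        - 3 * (3 : ℝ) ^ (-p) - (5 : ℝ) ^ (-p) := by
  rcases le_total p 2 with hp2 | hp2
  · -- case 1 ≤ p ≤ 2
    set s := p - 1 with hs
    have hs0 : 0 ≤ s := by linarith
    have hs1 : s ≤ 1 := by linarith
    have hps : p = 1 + s := by ring
    have hB1 : 1 + p * 1 ≤ (1 + 1 : ℝ) ^ p := one_add_mul_self_le_rpow_one_add (by norm_num) hp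
    have h2p1 : (2:ℝ) ^ (p + 1) = 2 * 2 ^ p := by
      rw [rpow_add (by norm_num), rpow_one]; ring
    have hc : ((3:ℝ)/2) ^ s ≤ 1 + s * (1/2) := by
      have := rpow_one_add_le_one_add_mul_self (s := 1/2) (by norm_num) hs0 hs1
      norm_num at this ⊢; linarith
    have hd : ((5:ℝ)/2) ^ s ≤ 1 + s * (3/2) := by
      have := rpow_one_add_le_one_add_mul_self (s := 3/2) (by norm_num) hs0 hs1
      norm_num at this ⊢; linarith
    have he : ((1:ℝ)/3) ^ s ≤ 1 + s * (-2/3) := by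
      have := rpow_one_add_le_one_add_mul_self (s := -2/3) (by norm_num) hs0 hs1
      norm_num at this ⊢; linarith
    have hf : ((1:ℝ)/5) ^ s ≤ 1 + s * (-4/5) := by
      have := rpow_one_add_le_one_add_mul_self (s := -4/5) (by norm_num) hs0 hs1
      norm_num at this ⊢; linarith
    have e23 : ((2:ℝ)/3) ^ p = (2/3) * (2/3) ^ s := by
      rw [hps, rpow_add (by norm_num), rpow_one]
    have e25 : ((2:ℝ)/5) ^ p = (2/5) * (2/5) ^ s := by
      rw [hps, rpow_add (by norm_num), rpow_one]
    have e3 : (3:ℝ) ^ (-p) = (1/3) * (1/3) ^ s := by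
      rw [hps, neg_add, rpow_add (by norm_num), one_div, inv_rpow (by norm_num),
        ← rpow_neg (by norm_num), rpow_neg_one]
    have e5 : (5:ℝ) ^ (-p) = (1/5) * (1/5) ^ s := by
      rw [hps, neg_add, rpow_add (by norm_num), one_div, inv_rpow (by norm_num),
        ← rpow_neg (by norm_num), rpow_neg_one]
    have h32pos : (0:ℝ) < 1 + s * (1/2) := by linarith
    have h52pos : (0:ℝ) < 1 + s * (3/2) := by linarith
    have hcc : (1 + s * (1/2))⁻¹ ≤ ((2:ℝ)/3) ^ s := by
      have h1 : ((2:ℝ)/3) ^ s = (((3:ℝ)/2) ^ s)⁻¹ := by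
        rw [show ((2:ℝ)/3) = ((3:ℝ)/2)⁻¹ by norm_num, inv_rpow (by norm_num)]
      rw [h1]
      exact inv_anti₀ (rpow_pos_of_pos (by norm_num) s) hc
    have hdd : (1 + s * (3/2))⁻¹ ≤ ((2:ℝ)/5) ^ s := by
      have h1 : ((2:ℝ)/5) ^ s = (((5:ℝ)/2) ^ s)⁻¹ := by
        rw [show ((2:ℝ)/5) = ((5:ℝ)/2)⁻¹ by norm_num, inv_rpow (by norm_num)]
      rw [h1]
      exact inv_anti₀ (rpow_pos_of_pos (by norm_num) s) hd
    rw [h2p1, e23, e25, e3, e5]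
    have key : 0 < 2 * (1 + p) - 5 + 3 * ((2/3) * (1 + s * (1/2))⁻¹) + (2/5) * (1 + s * (3/2))⁻¹
        - 3 * ((1/3) * (1 + s * (-2/3))) - (1/5) * (1 + s * (-4/5)) := by
      rw [hps]
      have ha : (1 + s * (1/2))⁻¹ * (1 + s * (1/2)) = 1 := inv_mul_cancel₀ (ne_of_gt h32pos)
      have hb : (1 + s * (3/2))⁻¹ * (1 + s * (3/2)) = 1 := inv_mul_cancel₀ (ne_of_gt h52pos)
      have hainv : 0 < (1 + s * (1/2))⁻¹ := inv_pos.2 h32pos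
      have hbinv : 0 < (1 + s * (3/2))⁻¹ := inv_pos.2 h52pos
      nlinarith [mul_pos hainv hbinv, sq_nonneg s, mul_nonneg (mul_nonneg hs0 hainv.le) hbinv.le]
    have hB1' : 1 + p ≤ (2:ℝ) ^ p := by norm_num at hB1; linarith
    linarith [key, hB1', hcc, hdd, he, hf]
  · -- case 2 ≤ p
    have hppos : (0:ℝ) < p := by linarith
    have h1 : (3:ℝ) ^ (-p) < (2/3) ^ p := by
      rw [rpow_neg (by norm_num), ← inv_rpow (by norm_num)]
      exact rpow_lt_rpow (by norm_num) (by norm_num) hppos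
    have h2 : (5:ℝ) ^ (-p) < (2/5) ^ p := by
      rw [rpow_neg (by norm_num), ← inv_rpow (by norm_num)]
      exact rpow_lt_rpow (by norm_num) (by norm_num) hppos
    have h3 : (8:ℝ) ≤ 2 ^ (p + 1) := by
      have := rpow_le_rpow_of_exponent_le (x := (2:ℝ)) (by norm_num)
        (show (3:ℝ) ≤ p + 1 by linarith)
      rw [show ((3:ℝ)) = ((3:ℕ):ℝ) by norm_num, rpow_natCast] at this
      norm_num at this; linarith
    linarith

lemma aux_lpNorm (p : ℝ) :
    lpNorm 3 p = (5 * 2 ^ p + 3 * (2/3) ^ p + (2/5) ^ p) ^ (1/p) := by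
  unfold lpNorm cauchyToeplitz
  congr 1
  simp only [Fin.sum_univ_three, Fin.val_zero, Fin.val_one, Fin.val_two]
  norm_num
  ring

theorem stmt_10 (p : ℝ) (hp : 1 ≤ p) :
    0 < 2 ^ (p + 1) - 5 + 3 * (2 / 3) ^ p + (2 / 5) ^ p
        - 3 * (3 : ℝ) ^ (-p) - (5 : ℝ) ^ (-p) ∧
    4 * (1 / (2 ^ p - 1)) ^ (1 / p) < (3 : ℝ) ^ (-(1 / p)) * lpNorm 3 p := by
  have hA := aux_part1 p hp
  refine ⟨hA, ?_⟩
  have hppos : (0:ℝ) < p := by linarith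
  have hpne : p ≠ 0 := ne_of_gt hppos
  have h2p : (2:ℝ) ≤ 2 ^ p := by
    have := rpow_le_rpow_of_exponent_le (x := (2:ℝ)) (by norm_num) hp
    rwa [rpow_one] at this
  have h2ppos : (0:ℝ) < 2 ^ p := rpow_pos_of_pos (by norm_num) p
  have hden : (0:ℝ) < 2 ^ p - 1 := by linarith
  set S : ℝ := 5 * 2 ^ p + 3 * (2/3) ^ p + (2/5) ^ p with hSdef
  have hSpos : 0 < S := by
    have := rpow_pos_of_pos (show (0:ℝ) < 2/3 by norm_num) p
    have := rpow_pos_of_pos (show (0:ℝ) < 2/5 by norm_num) p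
    positivity
  have m1 : (2:ℝ) ^ p * (3:ℝ) ^ (-p) = (2/3) ^ p := by
    rw [rpow_neg (by norm_num), div_rpow (by norm_num) (by norm_num), div_eq_mul_inv]
  have m2 : (2:ℝ) ^ p * (5:ℝ) ^ (-p) = (2/5) ^ p := by
    rw [rpow_neg (by norm_num), div_rpow (by norm_num) (by norm_num), div_eq_mul_inv]
  have m4 : (2:ℝ) ^ (p + 1) = 2 * 2 ^ p := by
    rw [rpow_add (by norm_num), rpow_one]; ring
  have hexp : (2:ℝ) ^ p * (2 ^ (p + 1) - 5 + 3 * (2 / 3) ^ p + (2 / 5) ^ p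
      - 3 * (3 : ℝ) ^ (-p) - (5 : ℝ) ^ (-p)) = S * (2 ^ p - 1) - 3 * (2 ^ p * 2 ^ p) := by
    rw [hSdef]
    linear_combination (2:ℝ) ^ p * m4 - 3 * m1 - m2
  have hkey : (2:ℝ) ^ p * 2 ^ p / (2 ^ p - 1) < S / 3 := by
    rw [div_lt_div_iff₀ hden (by norm_num)]
    have h := mul_pos h2ppos hA
    rw [hexp] at h
    linarith
  have hstep := rpow_lt_rpow (z := 1/p)
    (le_of_lt (div_pos (mul_pos h2ppos h2ppos) hden)) hkey (by positivity)
  have l1 : ((2:ℝ) ^ p * 2 ^ p / (2 ^ p - 1)) ^ (1/p) = 4 * (1 / (2 ^ p - 1)) ^ (1/p) := by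
    have h4 : (2:ℝ) ^ p * 2 ^ p = 4 ^ p := by
      rw [← mul_rpow (by norm_num) (by norm_num)]; congr 1; norm_num
    rw [div_eq_mul_one_div, h4,
      mul_rpow (rpow_nonneg (by norm_num) p) (one_div_pos.2 hden).le,
      ← rpow_mul (by norm_num), mul_one_div_cancel hpne, rpow_one]
  have l2 : (S / 3) ^ (1/p) = (3:ℝ) ^ (-(1/p)) * S ^ (1/p) := by
    rw [div_rpow hSpos.le (by norm_num), rpow_neg (by norm_num)]
    ring
  rw [l1, l2] at hstep
  rw [aux_lpNorm p, ← hSdef]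
  exact hstep
end

section
/- Let p ≥ 1 satisfy 2^p + 6^p ≥ 3^{p+1} + 1, and let q > p be finite. Then 2^{−1/q} ‖T_2‖_{p,q} > 4 (1/(2^p − 1))^{1/p}. -/
open Finset Real Filter

theorem stmt_12 (p q : ℝ) (hp : 1 ≤ p) (h : (3 : ℝ) ^ (p + 1) + 1 ≤ 2 ^ p + 6 ^ p)
    (hq : p < q) :
    4 * (1 / (2 ^ p - 1)) ^ (1 / p) < (2 : ℝ) ^ (-(1 / q)) * lpqNorm 2 p q := by
  have hp0 : (0:ℝ) < p := lt_of_lt_of_le one_pos hp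
  have hq0 : (0:ℝ) < q := lt_trans hp0 hq
  have h2p : (1:ℝ) < (2:ℝ) ^ p := by
    calc (1:ℝ) = (2:ℝ) ^ (0:ℝ) := by simp
    _ < 2 ^ p := by exact Real.rpow_lt_rpow_left_iff (by norm_num) |>.2 hp0
  set S0 : ℝ := (2:ℝ) ^ p + (2/3:ℝ) ^ p with hS0
  set S1 : ℝ := (2:ℝ) ^ p + (2:ℝ) ^ p with hS1
  have hlpq : lpqNorm 2 p q = (S0 ^ (q/p) + S1 ^ (q/p)) ^ (1/q) := by
    unfold lpqNorm cauchyToeplitz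
    rw [Fin.sum_univ_two, Fin.sum_univ_two, Fin.sum_univ_two]
    norm_num
    rfl
  set A : ℝ := (4:ℝ) ^ p / ((2:ℝ) ^ p - 1) with hA
  have h4pos : (0:ℝ) < (4:ℝ) ^ p := Real.rpow_pos_of_pos (by norm_num) p
  have h2p1 : (0:ℝ) < (2:ℝ)^p - 1 := by linarith
  have hA0 : 0 < A := div_pos h4pos h2p1
  have hS0pos : 0 < S0 := by positivity
  have hS1pos : 0 < S1 := by positivity
  have hS01 : S0 < S1 := by
    have : (2/3:ℝ) ^ p < (2:ℝ) ^ p :=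
      Real.rpow_lt_rpow (by norm_num) (by norm_num) hp0
    simp only [hS0, hS1]; linarith
  -- key: 2 A ≤ S0 + S1
  have h3p : (0:ℝ) < (3:ℝ) ^ p := Real.rpow_pos_of_pos (by norm_num) p
  have h6 : (6:ℝ) ^ p = (2:ℝ)^p * (3:ℝ)^p := by
    rw [← Real.mul_rpow (by norm_num) (by norm_num)]; norm_num
  have h4 : (4:ℝ) ^ p = (2:ℝ)^p * (2:ℝ)^p := by
    rw [← Real.mul_rpow (by norm_num) (by norm_num)]; norm_num
  have h23 : (2/3:ℝ) ^ p = (2:ℝ)^p / (3:ℝ)^p := by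
    rw [← Real.div_rpow (by norm_num) (by norm_num)]
  have h31 : (3:ℝ) ^ (p+1) = 3 * (3:ℝ)^p := by
    rw [Real.rpow_add (by norm_num), Real.rpow_one]; ring
  rw [h31, h6] at h
  have hmul : (3*(3:ℝ)^p + 1) * (2:ℝ)^p ≤ ((2:ℝ)^p + (2:ℝ)^p*(3:ℝ)^p) * (2:ℝ)^p :=
    mul_le_mul_of_nonneg_right h (by positivity)
  have hSb : (S0 + S1) * (3:ℝ)^p = 3 * (2:ℝ)^p * (3:ℝ)^p + (2:ℝ)^p := by
    simp only [hS0, hS1, h23]; field_simp; ring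
  have hstep : (2 * (4:ℝ)^p) * (3:ℝ)^p ≤ ((S0+S1) * ((2:ℝ)^p - 1)) * (3:ℝ)^p := by
    have e1 : ((S0+S1) * ((2:ℝ)^p - 1)) * (3:ℝ)^p
        = (3 * (2:ℝ)^p * (3:ℝ)^p + (2:ℝ)^p) * ((2:ℝ)^p - 1) := by
      rw [show ((S0+S1) * ((2:ℝ)^p - 1)) * (3:ℝ)^p
          = ((S0+S1) * (3:ℝ)^p) * ((2:ℝ)^p - 1) by ring, hSb]
    rw [e1, h4]
    nlinarith [hmul]
  have hmain : 2 * (4:ℝ)^p ≤ (S0+S1) * ((2:ℝ)^p - 1) :=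
    le_of_mul_le_mul_right hstep h3p
  have hkey : 2 * A ≤ S0 + S1 := by
    rw [hA, show 2 * ((4:ℝ)^p / ((2:ℝ)^p - 1)) = 2 * (4:ℝ)^p / ((2:ℝ)^p - 1) by ring,
      div_le_iff₀ h2p1]
    exact hmain
  -- strict convexity
  set r : ℝ := q / p with hr
  have hr1 : 1 < r := (one_lt_div hp0).2 hq
  clear_value S0 S1 A r
  have hAle : A ≤ (S0 + S1) / 2 := by linarith
  have hconv := (strictConvexOn_rpow hr1).2 (Set.mem_Ici.2 hS0pos.le)
    (Set.mem_Ici.2 hS1pos.le) (ne_of_lt hS01) (by norm_num : (0:ℝ) < 1/2)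
    (by norm_num : (0:ℝ) < 1/2) (by norm_num)
  simp only [smul_eq_mul] at hconv
  have hAr : 2 * A ^ r < S0 ^ r + S1 ^ r := by
    have h1 : A ^ r ≤ ((S0 + S1)/2) ^ r :=
      Real.rpow_le_rpow hA0.le (by linarith) (by linarith)
    have h2 : (1/2 * S0 + 1/2 * S1) ^ r < 1/2 * S0 ^ r + 1/2 * S1 ^ r := hconv
    have e : ((S0 + S1)/2 : ℝ) = 1/2 * S0 + 1/2 * S1 := by ring
    rw [e] at h1
    linarith
  rw [hlpq]
  have hsum_pos : 0 < S0 ^ r + S1 ^ r := by positivity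
  have hrw : (2:ℝ) ^ (-(1/q)) * (S0 ^ r + S1 ^ r) ^ (1/q)
      = ((S0 ^ r + S1 ^ r) / 2) ^ (1/q) := by
    rw [Real.div_rpow hsum_pos.le (by norm_num), Real.rpow_neg (by norm_num)]
    ring
  rw [hrw]
  have hlhs : 4 * (1 / ((2:ℝ) ^ p - 1)) ^ (1 / p) = (A ^ r) ^ (1/q) := by
    rw [← Real.rpow_mul hA0.le, show r * (1/q) = 1/p by
      rw [hr]; field_simp]
    have : A = (4:ℝ)^p * (1 / ((2:ℝ)^p - 1)) := by rw [hA]; ring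
    rw [this, Real.mul_rpow h4pos.le (by positivity), ← Real.rpow_mul (by norm_num : (0:ℝ) ≤ 4),
      mul_one_div, div_self (ne_of_gt hp0), Real.rpow_one]
  rw [hlhs]
  exact Real.rpow_lt_rpow (by positivity) (by linarith) (by positivity)
end

section
/- Let p > 1 satisfy 2^p + 6^p < 3^{p+1} + 1. Then there exists a unique δ_p ∈ (p, ∞) such that 2^{−1/δ_p} ‖T_2‖_{p,δ_p} = 4 (1/(2^p − 1))^{1/p}, i.e. 2^{−p} ((1 + 3^{−p})^{δ_p/p} + 2^{δ_p/p})^p = 2^{p δ_p} (1/(2^p − 1))^{δ_p}; moreover 2^{−1/q} ‖T_2‖_{p,q} < 4 (1/(2^p − 1))^{1/p} for p < q < δ_p and 2^{−1/q} ‖T_2‖_{p,q} ≥ 4 (1/(2^p − 1))^{1/p} for q ≥ δ_p. -/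
open Finset Real Filter

set_option maxHeartbeats 1000000 in
theorem stmt_14 (p : ℝ) (hp : 1 < p) (h : (2 : ℝ) ^ p + 6 ^ p < 3 ^ (p + 1) + 1) :
    ∃ d : ℝ, p < d ∧
      (2 : ℝ) ^ (-(1 / d)) * lpqNorm 2 p d = 4 * (1 / (2 ^ p - 1)) ^ (1 / p) ∧
      (2 : ℝ) ^ (-p) * ((1 + (3 : ℝ) ^ (-p)) ^ (d / p) + 2 ^ (d / p)) ^ p =
        2 ^ (p * d) * (1 / (2 ^ p - 1)) ^ d ∧
      (∀ q : ℝ, p < q → q < d →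
        (2 : ℝ) ^ (-(1 / q)) * lpqNorm 2 p q < 4 * (1 / (2 ^ p - 1)) ^ (1 / p)) ∧
      (∀ q : ℝ, d ≤ q →
        4 * (1 / (2 ^ p - 1)) ^ (1 / p) ≤ (2 : ℝ) ^ (-(1 / q)) * lpqNorm 2 p q) ∧
      (∀ d' : ℝ, p < d' →
        (2 : ℝ) ^ (-(1 / d')) * lpqNorm 2 p d' = 4 * (1 / (2 ^ p - 1)) ^ (1 / p) →
        d' = d) := by
  have hp0 : (0:ℝ) < p := by linarith
  have hp0' : p ≠ 0 := ne_of_gt hp0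
  -- basic positivity
  have hx2 : (0:ℝ) < 2 ^ p := rpow_pos_of_pos (by norm_num) p
  have hx3 : (0:ℝ) < 3 ^ p := rpow_pos_of_pos (by norm_num) p
  have hx23 : (0:ℝ) < (2/3:ℝ) ^ p := rpow_pos_of_pos (by norm_num) p
  have hx2gt : (2:ℝ) < 2 ^ p := by
    have := Real.rpow_lt_rpow_left_iff (x := (2:ℝ)) (y := 1) (z := p) (by norm_num)
    have h2 : (2:ℝ) ^ (1:ℝ) < 2 ^ p := this.2 hp
    simpa [Real.rpow_one] using h2
  have hx2m1 : (0:ℝ) < 2 ^ p - 1 := by linarith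
  have hu : (0:ℝ) < 1 / (2 ^ p - 1) := by positivity
  set A : ℝ := ((2:ℝ)^p + (2/3)^p) ^ (1/p) with hAdef
  set B : ℝ := ((2:ℝ)^p + 2^p) ^ (1/p) with hBdef
  set C : ℝ := 4 * (1 / (2 ^ p - 1)) ^ (1 / p) with hCdef
  have hA : 0 < A := rpow_pos_of_pos (by positivity) _
  have hB : 0 < B := rpow_pos_of_pos (by positivity) _
  have hC : 0 < C := by positivity
  have hAB : A < B := by
    apply Real.rpow_lt_rpow (by positivity) _ (by positivity)
    have : (2/3:ℝ) ^ p < 2 ^ p := Real.rpow_lt_rpow (by norm_num) (by norm_num) hp0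
    linarith
  set M : ℝ → ℝ := fun q => ((A ^ q + B ^ q) / 2) ^ (1 / q) with hMdef
  -- rpow power identities
  have hpowA : ∀ q : ℝ, A ^ q = ((2:ℝ)^p + (2/3)^p) ^ (q / p) := by
    intro q
    rw [hAdef, ← Real.rpow_mul (by positivity), one_div, inv_mul_eq_div]
  have hpowB : ∀ q : ℝ, B ^ q = ((2:ℝ)^p + 2^p) ^ (q / p) := by
    intro q
    rw [hBdef, ← Real.rpow_mul (by positivity), one_div, inv_mul_eq_div]
  -- the norm formula
  have F_eq : ∀ q : ℝ, 0 < q →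
      (2:ℝ) ^ (-(1/q)) * lpqNorm 2 p q = M q := by
    intro q hq
    have h1 : lpqNorm 2 p q
        = (((2:ℝ)^p + (2/3)^p) ^ (q/p) + ((2:ℝ)^p + 2^p) ^ (q/p)) ^ (1/q) := by
      unfold lpqNorm cauchyToeplitz
      norm_num [Fin.sum_univ_two, abs_div]
    rw [h1, ← hpowA, ← hpowB]
    simp only [hMdef]
    rw [Real.div_rpow (by positivity) (by norm_num : (0:ℝ) ≤ 2),
      Real.rpow_neg (by norm_num : (0:ℝ) ≤ 2)]
    ring
  -- strict monotonicity of M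
  have Mmono : ∀ s t : ℝ, 0 < s → s < t → M s < M t := by
    intro s t hs hst
    have ht : 0 < t := hs.trans hst
    have hAs : (0:ℝ) < A ^ s := rpow_pos_of_pos hA s
    have hBs : (0:ℝ) < B ^ s := rpow_pos_of_pos hB s
    have hne : A ^ s ≠ B ^ s := ne_of_lt (Real.rpow_lt_rpow hA.le hAB hs)
    have hts : 1 < t / s := (one_lt_div hs).2 hst
    have hc := (strictConvexOn_rpow hts).2 (Set.mem_Ici.2 hAs.le) (Set.mem_Ici.2 hBs.le)
      hne (by norm_num : (0:ℝ) < 1/2) (by norm_num : (0:ℝ) < 1/2) (by norm_num)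
    simp only [smul_eq_mul] at hc
    have e1 : ((A ^ s) ^ (t/s)) = A ^ t := by
      rw [← Real.rpow_mul hA.le, mul_div_cancel₀ _ hs.ne']
    have e2 : ((B ^ s) ^ (t/s)) = B ^ t := by
      rw [← Real.rpow_mul hB.le, mul_div_cancel₀ _ hs.ne']
    rw [e1, e2] at hc
    have e0 : 1/2 * A ^ s + 1/2 * B ^ s = (A ^ s + B ^ s) / 2 := by ring
    rw [e0] at hc
    have key : ((A ^ s + B ^ s) / 2) ^ (t/s) < (A ^ t + B ^ t) / 2 := by
      have : 1/2 * A ^ t + 1/2 * B ^ t = (A ^ t + B ^ t) / 2 := by ring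
      linarith
    have hs' : s ≠ 0 := hs.ne'
    have ht' : t ≠ 0 := ht.ne'
    have hMs : M s = (((A ^ s + B ^ s) / 2) ^ (t/s)) ^ (1/t) := by
      simp only [hMdef]
      have hts2 : t / s * (1/t) = 1/s := by field_simp
      rw [← Real.rpow_mul (by positivity : (0:ℝ) ≤ (A ^ s + B ^ s) / 2), hts2]
    rw [hMs]
    simp only [hMdef]
    exact Real.rpow_lt_rpow (by positivity) key (by positivity)
  -- helper: compare via p-th powers
  have rlt : ∀ x y : ℝ, 0 ≤ x → 0 ≤ y → x ^ p < y ^ p → x < y := by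
    intro x y hx hy hxy
    by_contra hle
    exact absurd (Real.rpow_le_rpow hy (not_lt.1 hle) hp0.le) (not_le.2 hxy)
  have hpe : 1 / p * p = (1:ℝ) := by field_simp
  have hApp : A ^ p = (2:ℝ)^p + (2/3)^p := by
    rw [hAdef, ← Real.rpow_mul (by positivity), hpe, Real.rpow_one]
  have hBpp : B ^ p = (2:ℝ)^p + 2^p := by
    rw [hBdef, ← Real.rpow_mul (by positivity), hpe, Real.rpow_one]
  have hCpp : C ^ p = 2^p * 2^p / (2 ^ p - 1) := by
    rw [hCdef, Real.mul_rpow (by norm_num) (by positivity),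
      ← Real.rpow_mul hu.le, hpe, Real.rpow_one]
    have h4 : (4:ℝ) ^ p = 2^p * 2^p := by
      rw [show (4:ℝ) = 2 * 2 by norm_num, Real.mul_rpow (by norm_num) (by norm_num)]
    rw [h4]; field_simp
  -- rewrite the hypothesis h
  have h23 : (2/3:ℝ) ^ p = 2^p / 3^p := Real.div_rpow (by norm_num) (by norm_num) p
  have h6 : (6:ℝ) ^ p = 2^p * 3^p := by
    rw [show (6:ℝ) = 2 * 3 by norm_num, Real.mul_rpow (by norm_num) (by norm_num)]
  have h3p1 : (3:ℝ) ^ (p+1) = 3^p * 3 := by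
    rw [Real.rpow_add (by norm_num), Real.rpow_one]
  have hh : (2:ℝ)^p + 2^p * 3^p < 3^p * 3 + 1 := by rw [← h6, ← h3p1]; exact h
  -- M p < C
  have hMpC : M p < C := by
    apply rlt _ _ (by positivity) hC.le
    have hMpp : (M p) ^ p = (A ^ p + B ^ p) / 2 := by
      simp only [hMdef]
      rw [← Real.rpow_mul (by positivity), hpe, Real.rpow_one]
    rw [hMpp, hApp, hBpp, hCpp, h23]
    rw [div_lt_div_iff₀ (by norm_num) hx2m1]
    have key : ((2:ℝ)^p + 2^p/3^p + (2^p + 2^p)) * (2^p - 1) * 3^p < 2^p * 2^p * 2 * 3^p := by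
      have e : ((2:ℝ)^p + 2^p/3^p + (2^p + 2^p)) * (2^p - 1) * 3^p
          = (3 * ((2:ℝ)^p*3^p) + 2^p) * ((2:ℝ)^p - 1) := by
        have hd : (2:ℝ)^p/3^p*3^p = 2^p := div_mul_cancel₀ _ (ne_of_gt hx3)
        linear_combination ((2:ℝ)^p - 1) * hd
      rw [e]
      nlinarith [mul_lt_mul_of_pos_left hh hx2, hx2gt, hx3, mul_pos hx2 hx3]
    have := (mul_lt_mul_iff_of_pos_right hx3).1 key
    linarith
  -- C < B
  have hCB : C < B := by
    apply rlt _ _ hC.le hB.le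
    rw [hCpp, hBpp]
    rw [div_lt_iff₀ hx2m1]
    nlinarith [hx2gt, hx2]
  -- find q0 with p < q0 and C ≤ M q0
  obtain ⟨q0, hq0C, hpq0⟩ : ∃ q0 : ℝ, C < B * 2 ^ (-(1/q0)) ∧ p < q0 := by
    have h1 : Tendsto (fun q : ℝ => -(1/q)) atTop (nhds 0) := by
      simpa using (tendsto_inv_atTop_zero (𝕜 := ℝ)).neg
    have h2 : ContinuousAt (fun x : ℝ => (2:ℝ) ^ x) 0 :=
      Real.continuousAt_const_rpow (by norm_num)
    have h3 : Tendsto (fun q : ℝ => (2:ℝ) ^ (-(1/q))) atTop (nhds 1) := by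
      simpa [Real.rpow_zero, Function.comp_def] using h2.tendsto.comp h1
    have h4 : Tendsto (fun q : ℝ => B * (2:ℝ) ^ (-(1/q))) atTop (nhds B) := by
      simpa using tendsto_const_nhds.mul h3
    exact ((h4.eventually (eventually_gt_nhds hCB)).and (eventually_gt_atTop p)).exists
  have hq0pos : 0 < q0 := hp0.trans hpq0
  have hCq0 : C ≤ M q0 := by
    have hle : (B ^ q0 / 2) ^ (1/q0) ≤ M q0 := by
      apply Real.rpow_le_rpow (by positivity) _ (by positivity)
      have : (0:ℝ) ≤ A ^ q0 := (rpow_pos_of_pos hA q0).le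
      linarith
    have heq : (B ^ q0 / 2) ^ (1/q0) = B * 2 ^ (-(1/q0)) := by
      rw [Real.div_rpow (by positivity) (by norm_num), ← Real.rpow_mul hB.le,
        mul_one_div_cancel (ne_of_gt hq0pos), Real.rpow_one, Real.rpow_neg (by norm_num),
        div_eq_mul_inv]
    linarith [hle, heq ▸ hq0C.le]
  -- continuity of M on [p, q0]
  have contM : ContinuousOn M (Set.Icc p q0) := by
    apply ContinuousOn.rpow
    · apply ContinuousOn.div_const
      apply ContinuousOn.add
      · exact (continuous_iff_continuousAt.2 fun x =>
          Real.continuousAt_const_rpow hA.ne').continuousOn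
      · exact (continuous_iff_continuousAt.2 fun x =>
          Real.continuousAt_const_rpow hB.ne').continuousOn
    · exact continuousOn_const.div continuousOn_id
        (fun x hx => ne_of_gt (lt_of_lt_of_le hp0 hx.1))
    · intro x hx
      left
      positivity
  -- IVT
  obtain ⟨d, hd_mem, hMd⟩ : ∃ d ∈ Set.Ioc p q0, M d = C := by
    have := intermediate_value_Ioc hpq0.le contM
    exact this ⟨hMpC, hCq0⟩
  obtain ⟨hpd, hdq0⟩ := hd_mem
  have hd0 : 0 < d := hp0.trans hpd
  have hMd' : ((A ^ d + B ^ d) / 2) ^ ((1:ℝ)/d) = C := by rw [← hMd]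
  refine ⟨d, hpd, ?_, ?_, ?_, ?_, ?_⟩
  · rw [F_eq d hd0, hMd]
  · -- the explicit p-th power equation
    have hsum : (A ^ d + B ^ d) / 2 = C ^ d := by
      have h2 := congrArg (fun x : ℝ => x ^ d) hMd'
      rwa [← Real.rpow_mul (by positivity), one_div, inv_mul_cancel₀ (ne_of_gt hd0),
        Real.rpow_one] at h2
    have hAd : A ^ d = 2 ^ d * (1 + (3:ℝ) ^ (-p)) ^ (d/p) := by
      rw [hpowA]
      have e : (2:ℝ)^p + (2/3)^p = 2^p * (1 + (3:ℝ)^(-p)) := by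
        rw [h23, Real.rpow_neg (by norm_num : (0:ℝ) ≤ 3)]
        field_simp
      rw [e, Real.mul_rpow hx2.le (by positivity), ← Real.rpow_mul (by norm_num),
        mul_div_cancel₀ _ hp0']
    have hBd : B ^ d = 2 ^ d * (2:ℝ) ^ (d/p) := by
      rw [hpowB]
      have e : (2:ℝ)^p + 2^p = 2^p * 2 := by ring
      rw [e, Real.mul_rpow hx2.le (by norm_num), ← Real.rpow_mul (by norm_num),
        mul_div_cancel₀ _ hp0']
    have hCd : C ^ d = 2 ^ (2*d) * (1 / (2 ^ p - 1)) ^ (d/p) := by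
      have h42 : (4:ℝ) = 2 ^ (2:ℝ) := by norm_num
      rw [hCdef, Real.mul_rpow (by norm_num) (by positivity), ← Real.rpow_mul hu.le,
        show (1:ℝ)/p*d = d/p by rw [one_div, inv_mul_eq_div], h42,
        ← Real.rpow_mul (by norm_num : (0:ℝ) ≤ 2)]
    -- S := (1 + 3^{-p})^{d/p} + 2^{d/p}
    have hS : (1 + (3:ℝ) ^ (-p)) ^ (d/p) + 2 ^ (d/p)
        = 2 ^ (1 + d) * (1 / (2 ^ p - 1)) ^ (d/p) := by
      have h2d : (0:ℝ) < 2 ^ d := rpow_pos_of_pos (by norm_num) d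
      have h5 := hsum
      rw [hAd, hBd, hCd] at h5
      have e2 : (2:ℝ) ^ (2*d) = 2 ^ d * 2 ^ d := by
        rw [two_mul, Real.rpow_add (by norm_num : (0:ℝ) < 2)]
      have e3 : (2:ℝ) ^ (1+d) = 2 * 2 ^ d := by
        rw [Real.rpow_add (by norm_num : (0:ℝ) < 2), Real.rpow_one]
      rw [e2] at h5
      rw [e3]
      apply mul_left_cancel₀ (ne_of_gt h2d)
      linear_combination 2 * h5
    rw [hS, Real.mul_rpow (by positivity) (by positivity),
      ← Real.rpow_mul (by norm_num : (0:ℝ) ≤ 2),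
      ← Real.rpow_mul hu.le]
    have e4 : d / p * p = d := div_mul_cancel₀ _ hp0'
    rw [e4, show (1+d)*p = p + p*d by ring, Real.rpow_add (by norm_num : (0:ℝ) < 2)]
    rw [Real.rpow_neg (by norm_num : (0:ℝ) ≤ 2)]
    field_simp
  · intro q hpq hqd
    rw [F_eq q (hp0.trans hpq), ← hMd]
    exact Mmono q d (hp0.trans hpq) hqd
  · intro q hdq
    rw [F_eq q (by linarith), ← hMd]
    rcases eq_or_lt_of_le hdq with rfl | hlt
    · exact le_refl _
    · exact (Mmono d q hd0 hlt).le
  · intro d' hpd' hFd'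
    rw [F_eq d' (hp0.trans hpd'), ← hMd] at hFd'
    rcases lt_trichotomy d' d with hlt | heq | hgt
    · exact absurd hFd' (ne_of_lt (Mmono d' d (hp0.trans hpd') hlt))
    · exact heq
    · exact absurd hFd'.symm (ne_of_lt (Mmono d d' hd0 hgt))
end

section
/- For the ℓ_{1,1} norm one has n^{−1} ‖T_n‖_{1,1} < 6 for all 1 ≤ n ≤ 7, and n^{−1} ‖T_n‖_{1,1} > 6 for all n ≥ 8. (Here 6 = 4·(1/2 + 1/(2^1 − 1)).) -/
open Finset Real Filter

noncomputable def Hh (n : ℕ) : ℝ := ∑ k ∈ Finset.range n, 2/(2*(k:ℝ)+1)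

noncomputable def Ff (i j : ℕ) : ℝ := |2/(1+2*((i:ℝ)-(j:ℝ)))|

noncomputable def Ss (n : ℕ) : ℝ := ∑ j ∈ Finset.range n, ∑ i ∈ Finset.range n, Ff i j

lemma lpq_eq_s15 (n : ℕ) : lpqNorm n 1 1 = Ss n := by
  unfold lpqNorm cauchyToeplitz Ss Ff
  norm_num [Real.rpow_one]
  rw [Fin.sum_univ_eq_sum_range (fun j => ∑ i : Fin n, |2/(1+2*(((i:ℕ):ℝ)-((j:ℕ):ℝ)))|)]
  apply Finset.sum_congr rfl
  intro j _
  rw [Fin.sum_univ_eq_sum_range (fun i => |2/(1+2*(((i:ℕ):ℝ)-((j:ℕ):ℝ)))|)]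

lemma row_eq (n : ℕ) : ∑ j ∈ Finset.range n, Ff n j = ∑ j ∈ Finset.range n, 2/(2*(j:ℝ)+3) := by
  rw [← Finset.sum_range_reflect]
  apply Finset.sum_congr rfl
  intro j hj
  rw [Finset.mem_range] at hj
  unfold Ff
  have h1 : ((n - 1 - j : ℕ) : ℝ) = (n:ℝ) - 1 - j := by
    have : (1:ℕ) + j ≤ n := by omega
    push_cast [Nat.sub_sub, Nat.cast_sub this]
    ring
  rw [h1, show (1+2*((n:ℝ)-((n:ℝ)-1-(j:ℝ)))) = 2*(j:ℝ)+3 by ring,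
    abs_of_pos (by positivity)]

lemma col_eq (n : ℕ) : ∑ i ∈ Finset.range n, Ff i n = Hh n := by
  rw [← Finset.sum_range_reflect]
  apply Finset.sum_congr rfl
  intro i hi
  rw [Finset.mem_range] at hi
  unfold Ff
  have h1 : ((n - 1 - i : ℕ) : ℝ) = (n:ℝ) - 1 - i := by
    have : (1:ℕ) + i ≤ n := by omega
    push_cast [Nat.sub_sub, Nat.cast_sub this]
    ring
  rw [h1, show (1+2*(((n:ℝ)-1-(i:ℝ))-(n:ℝ))) = -(2*(i:ℝ)+1) by ring, abs_div,
    abs_neg, abs_of_pos (by positivity : (0:ℝ) < 2*(i:ℝ)+1)]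
  norm_num

lemma Hh_succ' (n : ℕ) : Hh (n+1) = 2 + ∑ j ∈ Finset.range n, 2/(2*(j:ℝ)+3) := by
  unfold Hh
  rw [Finset.sum_range_succ']
  push_cast
  rw [add_comm]
  norm_num
  apply Finset.sum_congr rfl
  intro j _
  ring_nf

lemma Ss_succ (n : ℕ) : Ss (n+1) = Ss n + Hh (n+1) + Hh n := by
  unfold Ss
  rw [Finset.sum_range_succ]
  have inner : ∀ j, ∑ i ∈ Finset.range (n+1), Ff i j
      = (∑ i ∈ Finset.range n, Ff i j) + Ff n j := fun j => Finset.sum_range_succ _ _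
  rw [Finset.sum_congr rfl (fun j _ => inner j), Finset.sum_add_distrib, inner n,
    row_eq, col_eq, Hh_succ']
  have : Ff n n = 2 := by unfold Ff; norm_num
  rw [this]
  ring


lemma Hh_vals : Hh 0 = 0 ∧ Hh 1 = 2 ∧ Hh 2 = 8/3 ∧ Hh 3 = 46/15 ∧ Hh 4 = 352/105 ∧
    Hh 5 = 1126/315 ∧ Hh 6 = 13016/3465 ∧ Hh 7 = 176138/45045 ∧ Hh 8 = 182144/45045 := by
  norm_num [Hh, Finset.sum_range_succ]

lemma Ss_vals : Ss 1 = 2 ∧ Ss 2 = 20/3 ∧ Ss 3 = 62/5 ∧ Ss 4 = 1976/105 ∧ Ss 5 = 1622/63 ∧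
    Ss 6 = 38204/1155 ∧ Ss 7 = 262186/6435 ∧ Ss 8 = 2193584/45045 := by
  obtain ⟨h0, h1, h2, h3, h4, h5, h6, h7, h8⟩ := Hh_vals
  have v0 : Ss 0 = 0 := by simp [Ss]
  have v1 : Ss 1 = Ss 0 + Hh 1 + Hh 0 := Ss_succ 0
  have v2 : Ss 2 = Ss 1 + Hh 2 + Hh 1 := Ss_succ 1
  have v3 : Ss 3 = Ss 2 + Hh 3 + Hh 2 := Ss_succ 2
  have v4 : Ss 4 = Ss 3 + Hh 4 + Hh 3 := Ss_succ 3
  have v5 : Ss 5 = Ss 4 + Hh 5 + Hh 4 := Ss_succ 4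
  have v6 : Ss 6 = Ss 5 + Hh 6 + Hh 5 := Ss_succ 5
  have v7 : Ss 7 = Ss 6 + Hh 7 + Hh 6 := Ss_succ 6
  have v8 : Ss 8 = Ss 7 + Hh 8 + Hh 7 := Ss_succ 7
  rw [v0] at v1; rw [v1] at v2; rw [v2] at v3; rw [v3] at v4; rw [v4] at v5
  rw [v5] at v6; rw [v6] at v7; rw [v7] at v8
  rw [h0, h1, h2, h3, h4, h5, h6, h7, h8] at *
  refine ⟨?_, ?_, ?_, ?_, ?_, ?_, ?_, ?_⟩ <;> first
    | (rw [v1]; norm_num) | (rw [v2]; norm_num) | (rw [v3]; norm_num)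
    | (rw [v4]; norm_num) | (rw [v5]; norm_num) | (rw [v6]; norm_num)
    | (rw [v7]; norm_num) | (rw [v8]; norm_num)

lemma Hh_gt {n : ℕ} (h : 8 ≤ n) : 3 < Hh n := by
  have h8 : (3:ℝ) < Hh 8 := by
    have := Hh_vals.2.2.2.2.2.2.2.2
    rw [this]; norm_num
  refine h8.trans_le ?_
  exact Finset.sum_le_sum_of_subset_of_nonneg (Finset.range_subset_range.2 h)
    (fun i _ _ => by positivity)

lemma Ss_gt : ∀ n : ℕ, 8 ≤ n → 6 * (n:ℝ) < Ss n := by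
  intro n hn
  induction n, hn using Nat.le_induction with
  | base =>
    have := Ss_vals.2.2.2.2.2.2.2
    rw [this]; norm_num
  | succ n hn ih =>
    have h1 : 3 < Hh n := Hh_gt hn
    have h2 : 3 < Hh (n+1) := Hh_gt (hn.trans (Nat.le_succ n))
    have := Ss_succ n
    push_cast
    linarith

theorem stmt_15 :
    (∀ n : ℕ, 1 ≤ n → n ≤ 7 → (n : ℝ)⁻¹ * lpqNorm n 1 1 < 6) ∧
    (∀ n : ℕ, 8 ≤ n → 6 < (n : ℝ)⁻¹ * lpqNorm n 1 1) := by
  obtain ⟨s1, s2, s3, s4, s5, s6, s7, s8⟩ := Ss_vals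
  constructor
  · intro n h1 h7
    interval_cases n <;> rw [lpq_eq_s15] <;>
      simp only [s1, s2, s3, s4, s5, s6, s7] <;> norm_num
  · intro n hn
    have hpos : (0:ℝ) < n := by positivity
    rw [lpq_eq_s15, show ((n:ℝ))⁻¹ * Ss n = Ss n / n by ring, lt_div_iff₀ hpos]
    have := Ss_gt n hn
    linarith
end

section
/- Let p > 1 satisfy (1 − 2^{−p}) ζ(p) ≤ 2^{p−1} (1/2 + 1/(2^p − 1)). Then for every n ≥ 1 and every q with 1 ≤ q ≤ p, one has n^{−1/q} ‖T_n‖_{p,q} < 4 (1/2 + 1/(2^p − 1))^{1/p}. -/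
open Finset Real Filter

lemma zetaR_eq_tsum {p : ℝ} (hp : 1 < p) : zetaR p = ∑' n : ℕ, 1 / (n : ℝ) ^ p := by
  have h1 : riemannZeta (p : ℂ) = ∑' n : ℕ, 1 / (n : ℂ) ^ (p : ℂ) :=
    zeta_eq_tsum_one_div_nat_cpow (by simpa using hp)
  have h2 : ∀ n : ℕ, 1 / (n : ℂ) ^ (p : ℂ) = ((1 / (n : ℝ) ^ p : ℝ) : ℂ) := by
    intro n
    rw [← Complex.ofReal_natCast, ← Complex.ofReal_cpow (Nat.cast_nonneg n)]
    push_cast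
    ring
  rw [zetaR, h1]
  simp_rw [h2, ← Complex.ofReal_tsum]
  exact Complex.ofReal_re _

/-- Sum over odd naturals. -/
lemma odd_sum_eq {p : ℝ} (hp : 1 < p) :
    HasSum (fun k : ℕ => 1 / (2 * (k : ℝ) + 1) ^ p) ((1 - 2 ^ (-p)) * zetaR p) := by
  set f : ℕ → ℝ := fun n => 1 / (n : ℝ) ^ p with hf
  have hZ : Summable f := Real.summable_one_div_nat_rpow.mpr hp
  have heq : (fun k : ℕ => f (2 * k)) = fun k : ℕ => 2 ^ (-p) * f k := by
    funext k
    simp only [hf]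
    push_cast
    rw [Real.mul_rpow (by norm_num) (Nat.cast_nonneg k), Real.rpow_neg (by norm_num)]
    field_simp
  have hodd : Summable (fun k : ℕ => f (2 * k + 1)) :=
    hZ.comp_injective (fun a b hab => by omega)
  have heven : Summable (fun k : ℕ => f (2 * k)) := by
    rw [heq]; exact hZ.mul_left _
  have htot := tsum_even_add_odd heven hodd
  have hev : ∑' k : ℕ, f (2 * k) = 2 ^ (-p) * ∑' k, f k := by
    rw [heq, tsum_mul_left]
  have hoddsum : ∑' k : ℕ, f (2 * k + 1) = (1 - 2 ^ (-p)) * zetaR p := by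
    rw [zetaR_eq_tsum hp]
    have : ∑' k : ℕ, f (2 * k + 1) = ∑' k, f k - ∑' k : ℕ, f (2 * k) := by
      rw [← htot]; ring
    rw [this, hev, hf]; ring
  have := hodd.hasSum
  rw [hoddsum] at this
  convert this using 2 with k
  simp only [hf]
  push_cast
  ring_nf
lemma col_sum_lt {p : ℝ} (hp : 1 < p)
    (h : (1 - 2 ^ (-p)) * zetaR p ≤ 2 ^ (p - 1) * (1 / 2 + 1 / (2 ^ p - 1)))
    (n : ℕ) (j : Fin n) :
    ∑ i : Fin n, |cauchyToeplitz n i j| ^ p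
      < 4 ^ p * (1 / 2 + 1 / (2 ^ p - 1)) := by
  set c : ℝ := 1 / 2 + 1 / (2 ^ p - 1) with hc
  set O : ℝ := (1 - 2 ^ (-p)) * zetaR p with hOdef
  have hO := odd_sum_eq hp
  set F : ℤ → ℝ := fun k => (2 / |2 * (k : ℝ) + 1|) ^ p with hF
  have hden : ∀ k : ℤ, (0 : ℝ) < |2 * (k : ℝ) + 1| := by
    intro k
    rw [abs_pos]
    have : (2 * (k : ℝ) + 1) = ((2 * k + 1 : ℤ) : ℝ) := by push_cast; ring
    rw [this]
    exact_mod_cast (by omega : (2 * k + 1 : ℤ) ≠ 0)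
  have hFpos : ∀ k : ℤ, 0 < F k := fun k =>
    Real.rpow_pos_of_pos (div_pos two_pos (hden k)) p
  have habs : ∀ m : ℕ, |2 * ((m : ℤ) : ℝ) + 1| = 2 * (m : ℝ) + 1 := by
    intro m
    rw [abs_of_pos (by positivity)]
    push_cast; ring
  have habs' : ∀ m : ℕ, |2 * ((-(m + 1) : ℤ) : ℝ) + 1| = 2 * (m : ℝ) + 1 := by
    intro m
    have : (2 * ((-(m + 1) : ℤ) : ℝ) + 1) = -(2 * (m : ℝ) + 1) := by push_cast; ring
    rw [this, abs_neg, abs_of_pos (by positivity)]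
  have hdiv : ∀ x : ℝ, 0 < x → (2 / x) ^ p = 2 ^ p * (1 / x ^ p) := by
    intro x hx
    rw [Real.div_rpow (by norm_num) hx.le, div_eq_mul_one_div]
  have hFnat : HasSum (fun m : ℕ => F m) (2 ^ p * O) := by
    have := hO.mul_left ((2 : ℝ) ^ p)
    convert this using 2 with m
    · rfl
    simp only [hF]
    rw [habs m, hdiv _ (by positivity)]
  have hFneg : HasSum (fun m : ℕ => F (-(m + 1))) (2 ^ p * O) := by
    have := hO.mul_left ((2 : ℝ) ^ p)
    convert this using 2 with m
    · rfl
    simp only [hF]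
    rw [habs' m, hdiv _ (by positivity)]
  have hFsum : HasSum F (2 ^ p * O + 2 ^ p * O) :=
    hFnat.of_nat_of_neg_add_one hFneg
  have hSle : 2 ^ p * O + 2 ^ p * O ≤ 4 ^ p * c := by
    have h2 : (2 : ℝ) * 2 ^ (p - 1) = 2 ^ p := by
      rw [show p = 1 + (p - 1) by ring, Real.rpow_add two_pos, Real.rpow_one]
      ring_nf
    have hpos : (0 : ℝ) < 2 * 2 ^ p := by positivity
    calc 2 ^ p * O + 2 ^ p * O = (2 * 2 ^ p) * O := by ring
      _ ≤ (2 * 2 ^ p) * (2 ^ (p - 1) * c) := by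
          exact mul_le_mul_of_nonneg_left h hpos.le
      _ = 2 ^ p * (2 * 2 ^ (p - 1)) * c := by ring
      _ = 2 ^ p * 2 ^ p * c := by rw [h2]
      _ = 4 ^ p * c := by
          rw [show (4 : ℝ) = 2 * 2 by norm_num,
            Real.mul_rpow two_pos.le two_pos.le]
  have hentry : ∀ i : Fin n, |cauchyToeplitz n i j| ^ p = F ((i : ℤ) - (j : ℤ)) := by
    intro i
    simp only [hF, cauchyToeplitz]
    congr 1
    rw [abs_div]
    congr 1
    · norm_num
    · congr 1
      push_cast
      ring
  have e_inj : ∀ a ∈ Finset.univ, ∀ b ∈ Finset.univ,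
      ((a : Fin n) : ℤ) - (j : ℤ) = ((b : Fin n) : ℤ) - (j : ℤ) → a = b := by
    intro a _ b _ hab
    have : (a : ℤ) = (b : ℤ) := by omega
    exact Fin.ext (by exact_mod_cast this)
  have hsum_eq : ∑ i : Fin n, |cauchyToeplitz n i j| ^ p
      = ∑ k ∈ Finset.univ.image (fun i : Fin n => (i : ℤ) - (j : ℤ)), F k := by
    rw [Finset.sum_image e_inj]
    exact Finset.sum_congr rfl fun i _ => hentry i
  set s := Finset.univ.image (fun i : Fin n => (i : ℤ) - (j : ℤ)) with hs
  have hk0 : ((n : ℤ) - (j : ℤ)) ∉ s := by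
    simp only [hs, Finset.mem_image, Finset.mem_univ, true_and, not_exists]
    intro i hi
    have := i.isLt
    omega
  calc ∑ i : Fin n, |cauchyToeplitz n i j| ^ p = ∑ k ∈ s, F k := hsum_eq
    _ < F ((n : ℤ) - (j : ℤ)) + ∑ k ∈ s, F k :=
        lt_add_of_pos_left _ (hFpos _)
    _ = ∑ k ∈ insert ((n : ℤ) - (j : ℤ)) s, F k := (Finset.sum_insert hk0).symm
    _ ≤ 2 ^ p * O + 2 ^ p * O :=
        Summable.sum_le_tsum _ (fun k _ => (hFpos k).le) hFsum.summable |>.trans_eq hFsum.tsum_eq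
    _ ≤ 4 ^ p * c := hSle

theorem stmt_16 (p : ℝ) (hp : 1 < p)
    (h : (1 - 2 ^ (-p)) * zetaR p ≤ 2 ^ (p - 1) * (1 / 2 + 1 / (2 ^ p - 1)))
    (n : ℕ) (hn : 1 ≤ n) (q : ℝ) (hq1 : 1 ≤ q) (hqp : q ≤ p) :
    (n : ℝ) ^ (-(1 / q)) * lpqNorm n p q < 4 * (1 / 2 + 1 / (2 ^ p - 1)) ^ (1 / p) := by
  have hp0 : (0 : ℝ) < p := by linarith
  have hq0 : (0 : ℝ) < q := by linarith
  set c : ℝ := 1 / 2 + 1 / (2 ^ p - 1) with hc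
  have h2p : (1 : ℝ) < 2 ^ p := by
    calc (1 : ℝ) = 2 ^ (0 : ℝ) := (Real.rpow_zero 2).symm
      _ < 2 ^ p := Real.rpow_lt_rpow_left_iff one_lt_two |>.mpr hp0
  have hcpos : 0 < c := by
    have : (0 : ℝ) < 2 ^ p - 1 := by linarith
    positivity
  set B : ℝ := 4 ^ p * c with hB
  have hBpos : 0 < B := by positivity
  have hcols : ∀ j : Fin n, ∑ i : Fin n, |cauchyToeplitz n i j| ^ p < B :=
    fun j => col_sum_lt hp h n j
  have hcol_nonneg : ∀ j : Fin n, 0 ≤ ∑ i : Fin n, |cauchyToeplitz n i j| ^ p :=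
    fun j => Finset.sum_nonneg fun i _ => Real.rpow_nonneg (abs_nonneg _) p
  haveI : Nonempty (Fin n) := Fin.pos_iff_nonempty.mp (by omega)
  have hqp_pos : 0 < q / p := div_pos hq0 hp0
  have hsum_lt : ∑ j : Fin n, (∑ i : Fin n, |cauchyToeplitz n i j| ^ p) ^ (q / p)
      < (n : ℝ) * B ^ (q / p) := by
    calc ∑ j : Fin n, (∑ i : Fin n, |cauchyToeplitz n i j| ^ p) ^ (q / p)
        < ∑ _j : Fin n, B ^ (q / p) :=
          Finset.sum_lt_sum_of_nonempty Finset.univ_nonempty fun j _ =>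
            Real.rpow_lt_rpow (hcol_nonneg j) (hcols j) hqp_pos
      _ = (n : ℝ) * B ^ (q / p) := by
          rw [Finset.sum_const, Finset.card_univ, Fintype.card_fin, nsmul_eq_mul]
  have hnpos : (0 : ℝ) < (n : ℝ) := by exact_mod_cast hn
  have hlpq : lpqNorm n p q < (n : ℝ) ^ (1 / q) * B ^ (1 / p) := by
    have h1 : lpqNorm n p q < ((n : ℝ) * B ^ (q / p)) ^ (1 / q) := by
      rw [lpqNorm]
      exact Real.rpow_lt_rpow
        (Finset.sum_nonneg fun j _ => Real.rpow_nonneg (hcol_nonneg j) _)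
        hsum_lt (by positivity)
    have h2 : ((n : ℝ) * B ^ (q / p)) ^ (1 / q) = (n : ℝ) ^ (1 / q) * B ^ (1 / p) := by
      rw [Real.mul_rpow hnpos.le (Real.rpow_nonneg hBpos.le _),
        ← Real.rpow_mul hBpos.le]
      congr 1
      rw [div_mul_div_comm, mul_one, mul_comm p q, ← div_div, div_self hq0.ne']
    rwa [h2] at h1
  have hfinal : (n : ℝ) ^ (-(1 / q)) * ((n : ℝ) ^ (1 / q) * B ^ (1 / p))
      = 4 * c ^ (1 / p) := by
    rw [← mul_assoc, ← Real.rpow_add hnpos, neg_add_cancel, Real.rpow_zero, one_mul,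
      hB, Real.mul_rpow (by positivity) hcpos.le, ← Real.rpow_mul (by norm_num : (0:ℝ) ≤ 4),
      mul_one_div, div_self hp0.ne', Real.rpow_one]
  calc (n : ℝ) ^ (-(1 / q)) * lpqNorm n p q
      < (n : ℝ) ^ (-(1 / q)) * ((n : ℝ) ^ (1 / q) * B ^ (1 / p)) := by
        exact mul_lt_mul_of_pos_left hlpq (Real.rpow_pos_of_pos hnpos _)
    _ = 4 * c ^ (1 / p) := hfinal
end

section
/- For all p ≥ 1, one has 7^{−1/p} ‖T_7‖_p < 4 (1/2 + 1/(2^p − 1))^{1/p}; equivalently, 7·2^{p−1} + 7·2^p/(2^p − 1) − 13 − 11·3^{−p} − 9·5^{−p} − 7·7^{−p} − 5·9^{−p} − 3·11^{−p} − 13^{−p} > 0. -/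
open Finset Real Filter

lemma aux_sum (p : ℝ) : lpNorm 7 p =
    (13 * 2^p + 11 * (2/3:ℝ)^p + 9 * (2/5:ℝ)^p + 7 * (2/7:ℝ)^p + 5 * (2/9:ℝ)^p
      + 3 * (2/11:ℝ)^p + (2/13:ℝ)^p) ^ (1/p) := by
  unfold lpNorm cauchyToeplitz
  norm_num [Fin.sum_univ_seven, show ((3:Fin 7):ℕ) = 3 from rfl,
    show ((4:Fin 7):ℕ) = 4 from rfl, show ((5:Fin 7):ℕ) = 5 from rfl,
    show ((6:Fin 7):ℕ) = 6 from rfl, abs_div, abs_of_nonneg, abs_of_nonpos]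
  ring_nf

lemma aux_inv (p : ℝ) (b : ℝ) (hb : 0 < b) : (2/b:ℝ)^p = 2^p * b^(-p) := by
  rw [Real.div_rpow (by norm_num) hb.le, Real.rpow_neg hb.le, div_eq_mul_inv]

theorem stmt_17 (p : ℝ) (hp : 1 ≤ p) :
    (7 : ℝ) ^ (-(1 / p)) * lpNorm 7 p < 4 * (1 / 2 + 1 / (2 ^ p - 1)) ^ (1 / p) ∧
    0 < 7 * 2 ^ (p - 1) + 7 * 2 ^ p / (2 ^ p - 1) - 13 - 11 * (3 : ℝ) ^ (-p)
        - 9 * (5 : ℝ) ^ (-p) - 7 * (7 : ℝ) ^ (-p) - 5 * (9 : ℝ) ^ (-p)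
        - 3 * (11 : ℝ) ^ (-p) - (13 : ℝ) ^ (-p) := by
  have hp0 : (0:ℝ) < p := by linarith
  set t : ℝ := 2 ^ p with htdef
  have ht : (2:ℝ) ≤ t := by
    calc (2:ℝ) = 2 ^ (1:ℝ) := (Real.rpow_one 2).symm
    _ ≤ t := Real.rpow_le_rpow_of_exponent_le one_le_two hp
  have ht1 : (0:ℝ) < t - 1 := by linarith
  have ht0 : (0:ℝ) < t := by linarith
  have hb : ∀ b : ℝ, 1 ≤ b → b ^ (-p) ≤ b⁻¹ := by
    intro b hb1
    calc b ^ (-p) ≤ b ^ (-1:ℝ) :=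
      Real.rpow_le_rpow_of_exponent_le hb1 (by linarith)
    _ = b⁻¹ := by rw [Real.rpow_neg_one]
  have h3 := hb 3 (by norm_num)
  have h5 := hb 5 (by norm_num)
  have h7 := hb 7 (by norm_num)
  have h9 := hb 9 (by norm_num)
  have h11 := hb 11 (by norm_num)
  have h13 := hb 13 (by norm_num)
  have hquad : (131093:ℝ)/6435 < 7*t/2 + 7*t/(t-1) := by
    have h2 : (131093:ℝ)/6435 - 7*t/2 < 7*t/(t-1) := by
      rw [lt_div_iff₀ ht1]; nlinarith [sq_nonneg (t - 217141/90090)]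
    linarith
  have hpow : (2:ℝ) ^ (p - 1) = t / 2 := by
    rw [htdef, Real.rpow_sub (by norm_num), Real.rpow_one]
  set N : ℝ := 13 + 11 * (3:ℝ)^(-p) + 9 * (5:ℝ)^(-p) + 7 * (7:ℝ)^(-p)
      + 5 * (9:ℝ)^(-p) + 3 * (11:ℝ)^(-p) + (13:ℝ)^(-p) with hNdef
  have hNlt : N < 7*t/2 + 7*t/(t-1) := by
    have : N ≤ 131093/6435 := by rw [hNdef]; norm_num; linarith
    linarith
  refine ⟨?_, by rw [hpow]; rw [hNdef] at hNlt; linarith⟩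
  have hNpos : (0:ℝ) < N := by
    have a3 := Real.rpow_nonneg (by norm_num : (0:ℝ) ≤ 3) (-p)
    have a5 := Real.rpow_nonneg (by norm_num : (0:ℝ) ≤ 5) (-p)
    have a7 := Real.rpow_nonneg (by norm_num : (0:ℝ) ≤ 7) (-p)
    have a9 := Real.rpow_nonneg (by norm_num : (0:ℝ) ≤ 9) (-p)
    have a11 := Real.rpow_nonneg (by norm_num : (0:ℝ) ≤ 11) (-p)
    have a13 := Real.rpow_nonneg (by norm_num : (0:ℝ) ≤ 13) (-p)
    rw [hNdef]; linarith
  have hS : lpNorm 7 p = (t * N) ^ (1/p) := by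
    rw [aux_sum p, aux_inv p 3 (by norm_num), aux_inv p 5 (by norm_num),
      aux_inv p 7 (by norm_num), aux_inv p 9 (by norm_num),
      aux_inv p 11 (by norm_num), aux_inv p 13 (by norm_num)]
    congr 1
    rw [hNdef, htdef]; ring
  have hX : (0:ℝ) < 1/2 + 1/(t-1) := by positivity
  have hL : (7:ℝ) ^ (-(1/p)) * lpNorm 7 p = (t * N / 7) ^ (1/p) := by
    rw [hS, show (7:ℝ)^(-(1/p)) = (7⁻¹:ℝ)^(1/p) by
        rw [Real.inv_rpow (by norm_num), Real.rpow_neg (by norm_num)],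
      ← Real.mul_rpow (by norm_num) (by positivity)]
    congr 1; ring
  have h4 : (4:ℝ) * (1/2 + 1/(t-1)) ^ (1/p) = (t * t * (1/2 + 1/(t-1))) ^ (1/p) := by
    rw [show t * t = (4:ℝ)^p by
        rw [htdef, show (4:ℝ) = 2*2 by norm_num, Real.mul_rpow] <;> norm_num,
      Real.mul_rpow (by positivity) hX.le, ← Real.rpow_mul (by norm_num),
      mul_one_div, div_self hp0.ne', Real.rpow_one]
  rw [hL, h4]
  apply Real.rpow_lt_rpow (by positivity) _ (by positivity)
  have hEq : t * t * (1/2 + 1/(t-1)) = t * (7*t/2 + 7*t/(t-1)) / 7 := by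
    field_simp
  rw [hEq]
  gcongr
end
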